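/- arXiv:1709.03899 — 3 statements merged into one kernel-verified Lean document; each statement's English description precedes it below -/
import Mathlib

section
/- Let G be a level-transitive subgroup of Aut(T) for a level homogeneous rooted tree T. Then every non-trivial normal subgroup N of G contains the derived subgroup rst_G(n)' of some level rigid stabilizer. -/
/-- `ValidWord m l` : `l` is a vertex of the rooted tree whose branching numbers are
given by `m` (the vertex `u` has exactly `m u` children, labelled `0, …, m u - 1`). -/
def ValidWord (m : List ℕ → ℕ) (l : List ℕ) : Prop :=
  ∀ i : Fin l.length, l.get i < m (l.take i)

/-- The vertex set of the rooted locally finite tree with branching function `m`. -/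
def VertT (m : List ℕ → ℕ) := {l : List ℕ // ValidWord m l}

/-- A permutation of the vertices is an automorphism of the rooted tree if it
preserves levels (distance from the root) and the prefix (ancestor) relation. -/
def IsTreeAut {m : List ℕ → ℕ} (f : Equiv.Perm (VertT m)) : Prop :=
  (∀ v : VertT m, (f v).1.length = v.1.length) ∧
    ∀ v w : VertT m, v.1 <+: w.1 → (f v).1 <+: (f w).1

/-- The automorphism group of the rooted locally finite tree with branching
function `m`. -/
def AutGT (m : List ℕ → ℕ) : Subgroup (Equiv.Perm (VertT m)) where
  carrier := {f | IsTreeAut f ∧ IsTreeAut f.symm}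
  one_mem' := ⟨⟨fun _ => rfl, fun _ _ h => h⟩, ⟨fun _ => rfl, fun _ _ h => h⟩⟩
  mul_mem' := by
    rintro f g ⟨⟨hf1, hf2⟩, ⟨hf3, hf4⟩⟩ ⟨⟨hg1, hg2⟩, ⟨hg3, hg4⟩⟩
    refine ⟨⟨fun v => ?_, fun v w h => ?_⟩, ⟨fun v => ?_, fun v w h => ?_⟩⟩
    · show (f (g v)).1.length = v.1.length
      rw [hf1, hg1]
    · exact hf2 _ _ (hg2 _ _ h)
    · show (g.symm (f.symm v)).1.length = v.1.length
      rw [hg3, hf3]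
    · exact hg4 _ _ (hf4 _ _ h)
  inv_mem' := by
    rintro f ⟨h1, h2⟩
    exact ⟨h2, by first | exact h1 | (rw [Equiv.Perm.inv_def, Equiv.symm_symm]; exact h1)⟩

/-- The pointwise stabilizer of level `n`. -/
def lvlStabT (m : List ℕ → ℕ) (n : ℕ) : Subgroup (AutGT m) where
  carrier := {f | ∀ v : VertT m, v.1.length = n → (f : Equiv.Perm (VertT m)) v = v}
  one_mem' := fun _ _ => rfl
  mul_mem' := by
    intro f g hf hg v hv
    show (f : Equiv.Perm (VertT m)) ((g : Equiv.Perm (VertT m)) v) = v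
    rw [hg v hv, hf v hv]
  inv_mem' := by
    intro f hf v hv
    have h2 : (f : Equiv.Perm (VertT m))⁻¹ v = v := by
      rw [Equiv.Perm.inv_eq_iff_eq]; exact (hf v hv).symm
    simpa using h2

/-- The subgroup of automorphisms supported on the subtree rooted at `u`. -/
def rigidT {m : List ℕ → ℕ} (u : VertT m) : Subgroup (AutGT m) where
  carrier := {f | ∀ w : VertT m, ¬ u.1 <+: w.1 → (f : Equiv.Perm (VertT m)) w = w}
  one_mem' := fun _ _ => rfl
  mul_mem' := by
    intro f g hf hg w hw
    show (f : Equiv.Perm (VertT m)) ((g : Equiv.Perm (VertT m)) w) = w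
    rw [hg w hw, hf w hw]
  inv_mem' := by
    intro f hf w hw
    have h2 : (f : Equiv.Perm (VertT m))⁻¹ w = w := by
      rw [Equiv.Perm.inv_eq_iff_eq]; exact (hf w hw).symm
    simpa using h2

/-- The rigid stabilizer in `G` of the level `n`: the subgroup generated by the
rigid vertex stabilizers `rst_G(u) = G ⊓ rigidT u` over the vertices `u` of level
`n` (as these pairwise commute, it is their product). -/
def ristLT {m : List ℕ → ℕ} (G : Subgroup (AutGT m)) (n : ℕ) : Subgroup (AutGT m) :=
  ⨆ u ∈ {u : VertT m | u.1.length = n}, G ⊓ rigidT u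

/-- `G` acts transitively on every level of the tree. -/
def LevelTransT {m : List ℕ → ℕ} (G : Subgroup (AutGT m)) : Prop :=
  ∀ u v : VertT m, u.1.length = v.1.length →
    ∃ g ∈ G, (g : Equiv.Perm (VertT m)) u = v


open scoped commutatorElement

section Stmt5Aux

variable {m : List ℕ → ℕ}

lemma mem_rigidT_iff {u : VertT m} {f : AutGT m} :
    f ∈ rigidT u ↔ ∀ w : VertT m, ¬ u.1 <+: w.1 → (f : Equiv.Perm (VertT m)) w = w :=
  Iff.rfl

lemma not_prefix_both {u v : VertT m} (hne : u ≠ v) (hl : u.1.length = v.1.length)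
    {p : List ℕ} (h1 : u.1 <+: p) (h2 : v.1 <+: p) : False := by
  apply hne
  apply Subtype.ext
  have e1 : u.1 = p.take u.1.length := List.prefix_iff_eq_take.mp h1
  have e2 : v.1 = p.take v.1.length := List.prefix_iff_eq_take.mp h2
  rw [e1, e2, hl]

lemma fix_or_under {u : VertT m} {f : AutGT m} (hf : f ∈ rigidT u) (w : VertT m) :
    (f : Equiv.Perm (VertT m)) w = w ∨ u.1 <+: ((f : Equiv.Perm (VertT m)) w).1 := by
  by_cases h : u.1 <+: ((f : Equiv.Perm (VertT m)) w).1
  · exact Or.inr h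
  · left
    have h2 := mem_rigidT_iff.mp (inv_mem hf) _ h
    rw [show ((f⁻¹ : AutGT m) : Equiv.Perm (VertT m)) = ((f : AutGT m) : Equiv.Perm (VertT m))⁻¹ from rfl] at h2
    simp only [Equiv.Perm.inv_def, Equiv.symm_apply_apply] at h2
    exact h2.symm

lemma rigid_commute {u v : VertT m} (hne : u ≠ v) (hl : u.1.length = v.1.length)
    {x y : AutGT m} (hx : x ∈ rigidT u) (hy : y ∈ rigidT v) : x * y = y * x := by
  apply Subtype.ext
  apply Equiv.ext
  intro w
  show (x : Equiv.Perm (VertT m)) ((y : Equiv.Perm (VertT m)) w)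
      = (y : Equiv.Perm (VertT m)) ((x : Equiv.Perm (VertT m)) w)
  by_cases hu : u.1 <+: w.1
  · have hvw : ¬ v.1 <+: w.1 := fun h => not_prefix_both hne hl hu h
    rw [mem_rigidT_iff.mp hy w hvw]
    rcases fix_or_under hx w with h | h
    · rw [h, mem_rigidT_iff.mp hy w hvw]
    · exact (mem_rigidT_iff.mp hy _ (fun h2 => not_prefix_both hne hl h h2)).symm
  · by_cases hv : v.1 <+: w.1
    · have hxw : (x : Equiv.Perm (VertT m)) w = w := mem_rigidT_iff.mp hx w hu
      rw [hxw]
      rcases fix_or_under hy w with h | h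
      · rw [h, hxw]
      · exact mem_rigidT_iff.mp hx _ (fun h2 => not_prefix_both hne hl h2 h)
    · rw [mem_rigidT_iff.mp hy w hv, mem_rigidT_iff.mp hx w hu]
      exact (mem_rigidT_iff.mp hy w hv).symm

end Stmt5Aux

/-- Let `T` be a level homogeneous rooted locally finite tree (the
branching number `m u` of a vertex depends only on its level) and let `G ≤ Aut T`
act transitively on every level.  Then every non-trivial normal subgroup `N` of `G`
contains the derived subgroup of some level rigid stabilizer `rst_G(n)`. -/
theorem stmt_5 (m : List ℕ → ℕ)
    (hhom : ∀ l l' : List ℕ, l.length = l'.length → m l = m l')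
    (hpos : ∀ l : List ℕ, 1 ≤ m l)
    (G : Subgroup (AutGT m)) (htrans : LevelTransT G)
    (N : Subgroup (AutGT m)) (hNG : N ≤ G)
    (hNnorm : ∀ g ∈ G, ∀ x ∈ N, g * x * g⁻¹ ∈ N)
    (hN : N ≠ ⊥) :
    ∃ n : ℕ, ⁅ristLT G n, ristLT G n⁆ ≤ N := by
  -- obtain a nontrivial element of N
  have hex : ∃ g ∈ N, g ≠ 1 := by
    by_contra hcon
    push_neg at hcon
    exact hN (Subgroup.eq_bot_iff_forall N |>.mpr hcon)
  obtain ⟨g, hgN, hg1⟩ := hex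
  have hgperm : ∃ v : VertT m, (g : Equiv.Perm (VertT m)) v ≠ v := by
    by_contra hcon
    push_neg at hcon
    apply hg1
    apply Subtype.ext
    exact Equiv.ext hcon
  obtain ⟨v₀, hv₀⟩ := hgperm
  set n := v₀.1.length with hn
  refine ⟨n, ?_⟩
  -- key claim: for each vertex u of level n, commutators of rst_G(u) lie in N
  have key : ∀ u : VertT m, u.1.length = n → ∀ a b : AutGT m,
      a ∈ G ⊓ rigidT u → b ∈ G ⊓ rigidT u → ⁅a, b⁆ ∈ N := by
    intro u hu a b ha hb
    obtain ⟨h, hhG, hhv⟩ := htrans v₀ u (by rw [hu])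
    set g' : AutGT m := h * g * h⁻¹ with hg'def
    have hg'N : g' ∈ N := hNnorm h hhG g hgN
    have hg'u : (g' : Equiv.Perm (VertT m)) u ≠ u := by
      intro hcon
      apply hv₀
      have hinv : (h : Equiv.Perm (VertT m))⁻¹ u = v₀ := by
        rw [← hhv]; simp
      have : (h : Equiv.Perm (VertT m)) ((g : Equiv.Perm (VertT m))
          ((h : Equiv.Perm (VertT m))⁻¹ u)) = u := hcon
      rw [hinv] at this
      exact (h : Equiv.Perm (VertT m)).injective (by rw [this, hhv])
    set w : VertT m := (g' : Equiv.Perm (VertT m)) u with hwdef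
    have hwne : w ≠ u := hg'u
    have hwlen : w.1.length = u.1.length := g'.2.1.1 u
    -- d = g' a⁻¹ g'⁻¹ is supported in the subtree at w
    set d : AutGT m := g' * a⁻¹ * g'⁻¹ with hddef
    have hd : d ∈ rigidT w := by
      intro p hp
      show (g' : Equiv.Perm (VertT m)) ((a : Equiv.Perm (VertT m))⁻¹
        ((g' : Equiv.Perm (VertT m))⁻¹ p)) = p
      have hnu : ¬ u.1 <+: ((g' : Equiv.Perm (VertT m))⁻¹ p).1 := by
        intro hcon
        apply hp
        have := g'.2.1.2 u ((g' : Equiv.Perm (VertT m))⁻¹ p) hcon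
        simpa [hwdef] using this
      have hfix : (a : Equiv.Perm (VertT m))⁻¹ ((g' : Equiv.Perm (VertT m))⁻¹ p)
          = (g' : Equiv.Perm (VertT m))⁻¹ p :=
        mem_rigidT_iff.mp (inv_mem ha.2) _ hnu
      rw [hfix]
      simp
    set c : AutGT m := a * d with hcdef
    have hcN : c ∈ N := by
      have : c = (a * g' * a⁻¹) * g'⁻¹ := by rw [hcdef, hddef]; group
      rw [this]
      exact mul_mem (hNnorm a ha.1 g' hg'N) (inv_mem hg'N)
    have hdb : d * b = b * d := rigid_commute hwne (by rw [hwlen]) hd hb.2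
    have hcbN : c * (b * c⁻¹ * b⁻¹) ∈ N :=
      mul_mem hcN (hNnorm b hb.1 c⁻¹ (inv_mem hcN))
    have hid : c * (b * c⁻¹ * b⁻¹) = ⁅a, b⁆ := by
      have hdbd : d * (b * d⁻¹) = b := by rw [← mul_assoc, hdb]; group
      calc c * (b * c⁻¹ * b⁻¹) = a * (d * (b * d⁻¹)) * a⁻¹ * b⁻¹ := by
            rw [hcdef]; group
        _ = a * b * a⁻¹ * b⁻¹ := by rw [hdbd]
        _ = ⁅a, b⁆ := (commutatorElement_def a b).symm
    rw [← hid]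
    exact hcbN
  -- rewrite the rigid level stabilizer as a supremum over a subtype
  have hrw : ristLT G n = ⨆ u : {u : VertT m // u.1.length = n}, (G ⊓ rigidT u.1) := by
    rw [ristLT, iSup_subtype']
    rfl
  rw [Subgroup.commutator_le]
  intro x hx y hy
  rw [hrw] at hx hy
  refine (Subgroup.iSup_induction _ (C := fun x => x ∈ G ∧ ∀ y : AutGT m,
      y ∈ (⨆ u : {u : VertT m // u.1.length = n}, (G ⊓ rigidT u.1)) → ⁅x, y⁆ ∈ N) hx
      ?_ ?_ ?_).2 y hy
  · rintro u a ha
    refine ⟨ha.1, fun y hy2 => ?_⟩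
    refine (Subgroup.iSup_induction _ (C := fun y => y ∈ G ∧ ⁅a, y⁆ ∈ N) hy2 ?_ ?_ ?_).2
    · rintro u' b hb
      refine ⟨hb.1, ?_⟩
      by_cases hne : u.1 = u'.1
      · exact key u.1 u.2 a b ha (by rw [hne]; exact hb)
      · have hcomm : a * b = b * a :=
          rigid_commute hne (u.2.trans u'.2.symm) ha.2 hb.2
        have : ⁅a, b⁆ = 1 := commutatorElement_eq_one_iff_commute.mpr hcomm
        rw [this]
        exact one_mem N
    · exact ⟨one_mem G, by simpa using one_mem N⟩
    · rintro y₁ y₂ ⟨hyG, hyN⟩ ⟨hzG, hzN⟩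
      refine ⟨mul_mem hyG hzG, ?_⟩
      have hid : ⁅a, y₁ * y₂⁆ = ⁅a, y₁⁆ * (y₁ * ⁅a, y₂⁆ * y₁⁻¹) := by
        simp only [commutatorElement_def]; group
      rw [hid]
      exact mul_mem hyN (hNnorm y₁ hyG _ hzN)
  · exact ⟨one_mem G, fun y _ => by simpa using one_mem N⟩
  · rintro x₁ x₂ ⟨h1G, h1⟩ ⟨h2G, h2⟩
    refine ⟨mul_mem h1G h2G, fun y hy2 => ?_⟩
    have hid : ⁅x₁ * x₂, y⁆ = x₁ * ⁅x₂, y⁆ * x₁⁻¹ * ⁅x₁, y⁆ := by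
      simp only [commutatorElement_def]; group
    rw [hid]
    exact mul_mem (hNnorm x₁ h1G _ (h2 y hy2)) (h1 y hy2)
end

section
/- For the GGS-group G with constant defining vector, the rigid vertex stabilizer of any first-level vertex is contained in the derived subgroup of the first level stabilizer: rst_G(x) ≤ st_G(1)' for every first-level vertex x. Consequently rst_G(1) ≤ K, where K = ⟨ba⁻¹⟩^G. -/
/-- The vertex set of the rooted `d`-regular tree: finite words over `Fin d`. -/
abbrev Vert (d : ℕ) := List (Fin d)

/-- A permutation of the vertices sends children of `v` to children of the image
of `v`. -/
def MapsChildren {d : ℕ} (f : Equiv.Perm (Vert d)) : Prop :=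
  ∀ (v : Vert d) (i : Fin d), ∃ j : Fin d, f (v ++ [i]) = f v ++ [j]

/-- The automorphism group of the rooted `d`-regular tree, realised as the subgroup
of permutations of the vertex set which, together with their inverses, map children
to children (equivalently, preserve the root, the levels and the tree structure). -/
def AutT (d : ℕ) : Subgroup (Equiv.Perm (Vert d)) where
  carrier := {f | MapsChildren f ∧ MapsChildren f.symm}
  one_mem' := ⟨fun v i => ⟨i, rfl⟩, fun v i => ⟨i, rfl⟩⟩
  mul_mem' := by
    rintro f g ⟨hf, hf'⟩ ⟨hg, hg'⟩
    refine ⟨fun v i => ?_, fun v i => ?_⟩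
    · obtain ⟨j, hj⟩ := hg v i
      obtain ⟨k, hk⟩ := hf (g v) j
      exact ⟨k, by simp [Equiv.Perm.mul_apply, hj, hk]⟩
    · obtain ⟨j, hj⟩ := hf' v i
      obtain ⟨k, hk⟩ := hg' (f.symm v) j
      exact ⟨k, show g.symm (f.symm (v ++ [i])) = g.symm (f.symm v) ++ [k] by
        rw [hj, hk]⟩
  inv_mem' := by
    rintro f ⟨hf, hf'⟩
    exact ⟨hf', by exact hf⟩

/-- The full pointwise stabilizer of level `n` in `Aut T`. -/
def lvlStab (d n : ℕ) : Subgroup (AutT d) where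
  carrier := {f | ∀ v : Vert d, v.length = n → (f : Equiv.Perm (Vert d)) v = v}
  one_mem' := fun v _ => rfl
  mul_mem' := by
    intro f g hf hg v hv
    simp [Equiv.Perm.mul_apply, hg v hv, hf v hv]
  inv_mem' := by
    intro f hf v hv
    have h := hf v hv
    have h2 : (f : Equiv.Perm (Vert d))⁻¹ v = v := by
      rw [Equiv.Perm.inv_eq_iff_eq]; exact h.symm
    simpa using h2

/-- The subgroup of automorphisms supported on the subtree rooted at the word `u`. -/
def rigid (d : ℕ) (u : Vert d) : Subgroup (AutT d) where
  carrier := {f | ∀ w : Vert d, ¬ u <+: w → (f : Equiv.Perm (Vert d)) w = w}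
  one_mem' := fun w _ => rfl
  mul_mem' := by
    intro f g hf hg w hw
    simp [Equiv.Perm.mul_apply, hg w hw, hf w hw]
  inv_mem' := by
    intro f hf w hw
    have h := hf w hw
    have h2 : (f : Equiv.Perm (Vert d))⁻¹ w = w := by
      rw [Equiv.Perm.inv_eq_iff_eq]; exact h.symm
    simpa using h2

/-- The rigid stabilizer in `G` of the vertex `u`. -/
def ristV {d : ℕ} (G : Subgroup (AutT d)) (u : Vert d) : Subgroup (AutT d) :=
  G ⊓ rigid d u

/-- The rigid stabilizer in `G` of level `n`: the subgroup generated by (equivalently,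
the product of) the rigid vertex stabilizers at level `n`. -/
def ristL {d : ℕ} (G : Subgroup (AutT d)) (n : ℕ) : Subgroup (AutT d) :=
  ⨆ u ∈ {u : Vert d | u.length = n}, ristV G u

/-- `G` acts transitively on every level of the tree. -/
def LevelTransitive {d : ℕ} (G : Subgroup (AutT d)) : Prop :=
  ∀ u v : Vert d, u.length = v.length → ∃ g ∈ G, (g : Equiv.Perm (Vert d)) u = v

section GGS

variable (p : ℕ) [NeZero p]

/-- The rooted automorphism `a` of the `p`-regular tree: it permutes the first-level
subtrees by the `p`-cycle `x ↦ x + 1`. -/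
def gA : List (Fin p) → List (Fin p)
  | [] => []
  | x :: w => (x + 1) :: w

/-- The inverse of `gA`. -/
def gAI : List (Fin p) → List (Fin p)
  | [] => []
  | x :: w => (x - 1) :: w

/-- The directed automorphism `b = (a, a, …, a, b)` of the GGS-group with constant
defining vector. -/
def gB : List (Fin p) → List (Fin p)
  | [] => []
  | x :: w => if (x : ℕ) = p - 1 then x :: gB w else x :: gA p w

/-- The inverse of `gB`. -/
def gBI : List (Fin p) → List (Fin p)
  | [] => []
  | x :: w => if (x : ℕ) = p - 1 then x :: gBI w else x :: gAI p w

theorem gAI_gA : ∀ l, gAI p (gA p l) = l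
  | [] => rfl
  | x :: w => by simp [gA, gAI]

theorem gA_gAI : ∀ l, gA p (gAI p l) = l
  | [] => rfl
  | x :: w => by simp [gA, gAI]

theorem gBI_gB : ∀ l, gBI p (gB p l) = l
  | [] => rfl
  | x :: w => by
    by_cases h : (x : ℕ) = p - 1
    · simp [gB, gBI, h, gBI_gB w]
    · simp [gB, gBI, h, gAI_gA]

theorem gB_gBI : ∀ l, gB p (gBI p l) = l
  | [] => rfl
  | x :: w => by
    by_cases h : (x : ℕ) = p - 1
    · simp [gB, gBI, h, gB_gBI w]
    · simp [gB, gBI, h, gA_gAI]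

/-- `a` as a permutation of the vertices. -/
def aPerm : Equiv.Perm (Vert p) :=
  ⟨gA p, gAI p, gAI_gA p, gA_gAI p⟩

/-- `b` as a permutation of the vertices. -/
def bPerm : Equiv.Perm (Vert p) :=
  ⟨gB p, gBI p, gBI_gB p, gB_gBI p⟩

theorem gA_append (v : Vert p) (i : Fin p) : ∃ j, gA p (v ++ [i]) = gA p v ++ [j] := by
  cases v with
  | nil => exact ⟨i + 1, rfl⟩
  | cons x w => exact ⟨i, rfl⟩

theorem gAI_append (v : Vert p) (i : Fin p) : ∃ j, gAI p (v ++ [i]) = gAI p v ++ [j] := by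
  cases v with
  | nil => exact ⟨i - 1, rfl⟩
  | cons x w => exact ⟨i, rfl⟩

theorem gB_append : ∀ (v : Vert p) (i : Fin p), ∃ j, gB p (v ++ [i]) = gB p v ++ [j]
  | [], i => by
    by_cases h : (i : ℕ) = p - 1 <;> exact ⟨i, by simp [gB, gA, h]⟩
  | x :: w, i => by
    by_cases h : (x : ℕ) = p - 1
    · obtain ⟨j, hj⟩ := gB_append w i
      exact ⟨j, by simp [gB, h, hj]⟩
    · obtain ⟨j, hj⟩ := gA_append p w i
      exact ⟨j, by simp [gB, h, hj]⟩

theorem gBI_append : ∀ (v : Vert p) (i : Fin p), ∃ j, gBI p (v ++ [i]) = gBI p v ++ [j]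
  | [], i => by
    by_cases h : (i : ℕ) = p - 1 <;> exact ⟨i, by simp [gBI, gAI, h]⟩
  | x :: w, i => by
    by_cases h : (x : ℕ) = p - 1
    · obtain ⟨j, hj⟩ := gBI_append w i
      exact ⟨j, by simp [gBI, h, hj]⟩
    · obtain ⟨j, hj⟩ := gAI_append p w i
      exact ⟨j, by simp [gBI, h, hj]⟩

/-- The generator `a` of the GGS-group, as a tree automorphism. -/
def aut_a : AutT p :=
  ⟨aPerm p, gA_append p, gAI_append p⟩

/-- The generator `b` of the GGS-group (constant defining vector), as a tree
automorphism. -/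
def aut_b : AutT p :=
  ⟨bPerm p, gB_append p, gBI_append p⟩

/-- The GGS-group with constant defining vector: `G = ⟨a, b⟩`. -/
def GGS : Subgroup (AutT p) :=
  Subgroup.closure {aut_a p, aut_b p}

/-- `K = ⟨b a⁻¹⟩^G`, the normal closure of `b a⁻¹` in `G`. -/
def GGSK : Subgroup (AutT p) :=
  Subgroup.closure {x | ∃ g ∈ GGS p, x = g * (aut_b p * (aut_a p)⁻¹) * g⁻¹}

end GGS

open Fin.NatCast
open scoped commutatorElement

section Dev
set_option linter.unusedSectionVars false
variable {p : ℕ} [NeZero p]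

theorem mc_prefix {f : Equiv.Perm (Vert p)} (hf : MapsChildren f) :
    ∀ (w v : Vert p), ∃ w', f (v ++ w) = f v ++ w' ∧ w'.length = w.length := by
  intro w
  induction w using List.reverseRecOn with
  | nil => intro v; exact ⟨[], by simp, rfl⟩
  | append_singleton w i ih =>
    intro v
    obtain ⟨w', hw', hl⟩ := ih v
    obtain ⟨j, hj⟩ := hf (v ++ w) i
    exact ⟨w' ++ [j], by rw [← List.append_assoc, hj, hw', List.append_assoc], by simp [hl]⟩

theorem autT_len (f : AutT p) : ∀ w : Vert p, ((f : Equiv.Perm (Vert p)) w).length = w.length := by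
  have h1 : ∀ w : Vert p, ((f : Equiv.Perm (Vert p)) w).length
      = ((f : Equiv.Perm (Vert p)) []).length + w.length := by
    intro w
    obtain ⟨w', hw', hl⟩ := mc_prefix f.2.1 w []
    simp at hw'
    rw [hw', List.length_append, hl]
  have h2 : ∀ w : Vert p, ((f : Equiv.Perm (Vert p)).symm w).length
      = ((f : Equiv.Perm (Vert p)).symm []).length + w.length := by
    intro w
    obtain ⟨w', hw', hl⟩ := mc_prefix f.2.2 w []
    simp at hw'
    rw [hw', List.length_append, hl]
  have key : ((f : Equiv.Perm (Vert p)) []).length = 0 := by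
    have := h2 ((f : Equiv.Perm (Vert p)) [])
    rw [Equiv.symm_apply_apply] at this
    simp at this
    omega
  intro w
  rw [h1 w, key, Nat.zero_add]

theorem autT_nil (f : AutT p) : (f : Equiv.Perm (Vert p)) [] = [] :=
  List.length_eq_zero_iff.mp (autT_len f [])

/-- The permutation induced on the first level. -/
def tauA (f : AutT p) (k : Fin p) : Fin p :=
  ((f : Equiv.Perm (Vert p)) [k]).headI

theorem apply_singleton (f : AutT p) (k : Fin p) :
    (f : Equiv.Perm (Vert p)) [k] = [tauA f k] := by
  have h := autT_len f [k]
  match hh : (f : Equiv.Perm (Vert p)) [k] with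
  | [j] => rw [tauA, hh]; rfl
  | [] => rw [hh] at h; simp at h
  | a :: b :: l => rw [hh] at h; simp at h

theorem cons_apply (f : AutT p) (k : Fin p) (w : Vert p) :
    (f : Equiv.Perm (Vert p)) (k :: w)
      = tauA f k :: ((f : Equiv.Perm (Vert p)) (k :: w)).tail := by
  obtain ⟨w', hw', hl⟩ := mc_prefix f.2.1 w [k]
  have : (k :: w : Vert p) = [k] ++ w := rfl
  rw [this, hw', apply_singleton]
  rfl

theorem tauA_mul (f g : AutT p) (k : Fin p) : tauA (f * g) k = tauA f (tauA g k) := by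
  have : ((f * g : AutT p) : Equiv.Perm (Vert p)) [k]
      = (f : Equiv.Perm (Vert p)) ((g : Equiv.Perm (Vert p)) [k]) := rfl
  rw [tauA, this, apply_singleton g, apply_singleton f]
  rfl

theorem tauA_one (k : Fin p) : tauA (1 : AutT p) k = k := rfl

theorem tauA_inv_tauA (f : AutT p) (k : Fin p) : tauA f⁻¹ (tauA f k) = k := by
  have := tauA_mul f⁻¹ f k
  rw [inv_mul_cancel] at this
  rw [← this, tauA_one]

theorem tauA_tauA_inv (f : AutT p) (k : Fin p) : tauA f (tauA f⁻¹ k) = k := by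
  have := tauA_mul f f⁻¹ k
  rw [mul_inv_cancel] at this
  rw [← this, tauA_one]

end Dev
section Dev2
set_option linter.unusedSectionVars false
variable {p : ℕ} [NeZero p]

/-- Raw section map. -/
def secP (f : AutT p) (k : Fin p) (w : Vert p) : Vert p :=
  ((f : Equiv.Perm (Vert p)) (k :: w)).tail

theorem cons_apply' (f : AutT p) (k : Fin p) (w : Vert p) :
    (f : Equiv.Perm (Vert p)) (k :: w) = tauA f k :: secP f k w :=
  cons_apply f k w

theorem secP_secP (f g : AutT p) (k : Fin p) (w : Vert p) :
    secP f (tauA g k) (secP g k w) = secP (f * g) k w := by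
  have h1 : ((f * g : AutT p) : Equiv.Perm (Vert p)) (k :: w)
      = (f : Equiv.Perm (Vert p)) ((g : Equiv.Perm (Vert p)) (k :: w)) := rfl
  have h2 := cons_apply' g k w
  have h3 := cons_apply' f (tauA g k) (secP g k w)
  have h4 := cons_apply' (f*g) k w
  rw [h1, h2, h3] at h4
  exact (List.cons.injEq _ _ _ _ ▸ congrArg id h4.symm).2.symm ▸ rfl

theorem secP_one (k : Fin p) (w : Vert p) : secP (1 : AutT p) k w = w := rfl

/-- The section as an equivalence. -/
def secE (f : AutT p) (k : Fin p) : Equiv.Perm (Vert p) where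
  toFun := secP f k
  invFun := secP f⁻¹ (tauA f k)
  left_inv := by
    intro w
    have := secP_secP f⁻¹ f k w
    rwa [inv_mul_cancel, secP_one] at this
  right_inv := by
    intro w
    have := secP_secP f f⁻¹ (tauA f k) w
    rw [mul_inv_cancel, secP_one, tauA_inv_tauA] at this
    exact this

theorem secP_append (f : AutT p) (k : Fin p) (v : Vert p) (i : Fin p) :
    ∃ j, secP f k (v ++ [i]) = secP f k v ++ [j] := by
  obtain ⟨j, hj⟩ := f.2.1 (k :: v) i
  refine ⟨j, ?_⟩
  have h : (k :: (v ++ [i]) : Vert p) = (k :: v) ++ [i] := rfl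
  rw [secP, h, hj, cons_apply' f k v]
  rfl

/-- The section as a tree automorphism. -/
def secA (f : AutT p) (k : Fin p) : AutT p :=
  ⟨secE f k, fun v i => secP_append f k v i, by
    intro v i
    have h : (secE f k).symm = (secE f⁻¹ (tauA f k)) := by
      apply Equiv.ext
      intro w
      show secP f⁻¹ (tauA f k) w = secP (f⁻¹) ((tauA (f⁻¹)⁻¹) k) w
      rw [show (f⁻¹)⁻¹ = f from inv_inv f]
    rw [h]
    exact secP_append f⁻¹ (tauA f k) v i⟩

theorem secA_apply (f : AutT p) (k : Fin p) (w : Vert p) :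
    ((secA f k : AutT p) : Equiv.Perm (Vert p)) w = secP f k w := rfl

theorem secA_mul (f g : AutT p) (k : Fin p) :
    secA (f * g) k = secA f (tauA g k) * secA g k := by
  apply Subtype.ext
  apply Equiv.ext
  intro w
  exact (secP_secP f g k w).symm

theorem secA_one (k : Fin p) : secA (1 : AutT p) k = 1 := by
  apply Subtype.ext; apply Equiv.ext; intro w; rfl

theorem secA_inv (f : AutT p) (k : Fin p) :
    secA f⁻¹ k = (secA f (tauA f⁻¹ k))⁻¹ := by
  have h := secA_mul f f⁻¹ k
  rw [mul_inv_cancel, secA_one] at h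
  rw [eq_inv_iff_mul_eq_one]
  have h2 := secA_mul f⁻¹ f (tauA f⁻¹ k)
  rw [inv_mul_cancel, secA_one, tauA_tauA_inv] at h2
  exact h2.symm

end Dev2
section Dev3
set_option linter.unusedSectionVars false
variable {p : ℕ} [NeZero p]

theorem tauA_a (k : Fin p) : tauA (aut_a p) k = k + 1 := rfl

theorem secA_a (k : Fin p) : secA (aut_a p) k = 1 := by
  apply Subtype.ext; apply Equiv.ext; intro w; rfl

theorem tauA_b (k : Fin p) : tauA (aut_b p) k = k := by
  show (gB p [k]).headI = k
  rw [gB]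
  split_ifs <;> rfl

theorem secA_b (k : Fin p) :
    secA (aut_b p) k = if (k : ℕ) = p - 1 then aut_b p else aut_a p := by
  apply Subtype.ext; apply Equiv.ext; intro w
  show (gB p (k :: w)).tail = _
  rw [gB]
  split_ifs with h <;> simp [h] <;> rfl

theorem a_pow_apply (n : ℕ) (x : Fin p) (w : Vert p) :
    ((aut_a p ^ n : AutT p) : Equiv.Perm (Vert p)) (x :: w) = (x + n) :: w := by
  induction n generalizing x with
  | zero => simp
  | succ n ih =>
    have : ((aut_a p ^ (n+1) : AutT p) : Equiv.Perm (Vert p)) (x :: w)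
        = ((aut_a p ^ n : AutT p) : Equiv.Perm (Vert p))
            (((aut_a p : AutT p) : Equiv.Perm (Vert p)) (x :: w)) := by
      rw [pow_succ]; rfl
    rw [this]
    show ((aut_a p ^ n : AutT p) : Equiv.Perm (Vert p)) ((x+1) :: w) = _
    rw [ih (x+1)]
    congr 1
    push_cast
    abel

theorem a_pow_p : aut_a p ^ p = 1 := by
  apply Subtype.ext; apply Equiv.ext; intro l
  match l with
  | [] => rw [autT_nil]; rfl
  | x :: w =>
    show ((aut_a p ^ p : AutT p) : Equiv.Perm (Vert p)) (x :: w) = x :: w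
    rw [a_pow_apply, Fin.natCast_self, add_zero]

theorem b_pow_last (n : ℕ) (x : Fin p) (hx : (x : ℕ) = p - 1) (w : Vert p) :
    ((aut_b p ^ n : AutT p) : Equiv.Perm (Vert p)) (x :: w)
      = x :: ((aut_b p ^ n : AutT p) : Equiv.Perm (Vert p)) w := by
  induction n generalizing w with
  | zero => rfl
  | succ n ih =>
    have e : ∀ l, ((aut_b p ^ (n+1) : AutT p) : Equiv.Perm (Vert p)) l
        = ((aut_b p ^ n : AutT p) : Equiv.Perm (Vert p))
            (((aut_b p : AutT p) : Equiv.Perm (Vert p)) l) := by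
      intro l; rw [pow_succ]; rfl
    rw [e, e]
    show ((aut_b p ^ n : AutT p) : Equiv.Perm (Vert p)) (gB p (x :: w)) = _
    rw [gB, if_pos hx, ih (gB p w)]
    rfl

theorem b_pow_other (n : ℕ) (x : Fin p) (hx : ¬ (x : ℕ) = p - 1) (w : Vert p) :
    ((aut_b p ^ n : AutT p) : Equiv.Perm (Vert p)) (x :: w)
      = x :: ((aut_a p ^ n : AutT p) : Equiv.Perm (Vert p)) w := by
  induction n generalizing w with
  | zero => rfl
  | succ n ih =>
    have e : ((aut_b p ^ (n+1) : AutT p) : Equiv.Perm (Vert p)) (x :: w)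
        = ((aut_b p ^ n : AutT p) : Equiv.Perm (Vert p))
            (((aut_b p : AutT p) : Equiv.Perm (Vert p)) (x :: w)) := by
      rw [pow_succ]; rfl
    rw [e]
    show ((aut_b p ^ n : AutT p) : Equiv.Perm (Vert p)) (gB p (x :: w)) = _
    rw [gB, if_neg hx, ih (gA p w)]
    congr 1

theorem b_pow_p : aut_b p ^ p = 1 := by
  apply Subtype.ext; apply Equiv.ext; intro l
  induction l with
  | nil => rw [autT_nil]; rfl
  | cons x w ih =>
    show ((aut_b p ^ p : AutT p) : Equiv.Perm (Vert p)) (x :: w) = x :: w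
    by_cases hx : (x : ℕ) = p - 1
    · rw [b_pow_last p x hx w, ih]
      rfl
    · rw [b_pow_other p x hx w]
      have := a_pow_p (p := p)
      rw [this]
      rfl

end Dev3
section Dev4
set_option linter.unusedSectionVars false
variable {p : ℕ} [NeZero p]

theorem a_mem : aut_a p ∈ GGS p := Subgroup.subset_closure (Set.mem_insert _ _)
theorem b_mem : aut_b p ∈ GGS p := Subgroup.subset_closure (Set.mem_insert_of_mem _ rfl)

/-- The conjugates `c j = a^j b a^{-j}`. -/
def cgen (j : Fin p) : AutT p := aut_a p ^ (j : ℕ) * aut_b p * (aut_a p ^ (j : ℕ))⁻¹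

theorem cgen_mem (j : Fin p) : cgen (p := p) j ∈ GGS p := by
  exact Subgroup.mul_mem _ (Subgroup.mul_mem _ (Subgroup.pow_mem _ a_mem _) b_mem)
    (Subgroup.inv_mem _ (Subgroup.pow_mem _ a_mem _))

theorem a_pow_mod (m : ℕ) : aut_a p ^ (m % p) = aut_a p ^ m := by
  conv_rhs => rw [← Nat.mod_add_div m p, pow_add, pow_mul, a_pow_p]
  simp

theorem tauA_a_pow (n : ℕ) (k : Fin p) : tauA (aut_a p ^ n) k = k + n := by
  rw [tauA, a_pow_apply]
  rfl

theorem secA_a_pow (n : ℕ) (k : Fin p) : secA (aut_a p ^ n) k = 1 := by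
  apply Subtype.ext; apply Equiv.ext; intro w
  show secP _ _ _ = w
  rw [secP, a_pow_apply]
  rfl

theorem tauA_a_pow_inv (n : ℕ) (k : Fin p) : tauA ((aut_a p ^ n)⁻¹) k = k - n := by
  have := tauA_inv_tauA (aut_a p ^ n) (k - n)
  rwa [tauA_a_pow, sub_add_cancel] at this

theorem secA_a_pow_inv (n : ℕ) (k : Fin p) : secA ((aut_a p ^ n)⁻¹) k = 1 := by
  rw [secA_inv, secA_a_pow, inv_one]

theorem tauA_cgen (j k : Fin p) : tauA (cgen j) k = k := by
  rw [cgen, tauA_mul, tauA_mul, tauA_a_pow_inv, tauA_b, tauA_a_pow, sub_add_cancel]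

theorem secA_cgen (j k : Fin p) :
    secA (cgen j) k = if ((k - j : Fin p) : ℕ) = p - 1 then aut_b p else aut_a p := by
  rw [cgen, secA_mul, secA_mul, tauA_a_pow_inv, secA_a_pow_inv, tauA_b,
    secA_b, secA_a_pow]
  simp

theorem cgen_lvl (j : Fin p) : cgen (p := p) j ∈ lvlStab p 1 := by
  intro v hv
  match v, hv with
  | [k], _ =>
    rw [apply_singleton, tauA_cgen]

theorem cgen_pow_p (j : Fin p) : cgen (p := p) j ^ p = 1 := by
  rw [cgen, conj_pow, b_pow_p, mul_one, mul_inv_cancel]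

/-- Fractality: elements of GGS act on level one by translations and have
sections in GGS. -/
theorem ggs_frac : ∀ g ∈ GGS p, (∀ k, tauA g k = k + tauA g 0) ∧ (∀ k, secA g k ∈ GGS p) := by
  intro g hg
  have hb : ∀ k, tauA (aut_b p) k = k + tauA (aut_b p) 0 := fun k => by
    rw [tauA_b, tauA_b, add_zero]
  have hbs : ∀ k, secA (aut_b p) k ∈ GGS p := fun k => by
    rw [secA_b]; split_ifs
    · exact b_mem
    · exact a_mem
  induction hg using Subgroup.closure_induction'' with
  | one => exact ⟨fun k => by rw [tauA_one, tauA_one, add_zero], fun k => by rw [secA_one]; exact Subgroup.one_mem _⟩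
  | mem x hx =>
    rcases hx with rfl | rfl
    · exact ⟨fun k => by rw [tauA_a, tauA_a, zero_add], fun k => by rw [secA_a]; exact Subgroup.one_mem _⟩
    · exact ⟨hb, hbs⟩
  | inv_mem x hx =>
    rcases hx with rfl | rfl
    · have hh : (aut_a p)⁻¹ = aut_a p ^ (p - 1) := by
        rw [inv_eq_iff_mul_eq_one, ← pow_succ',
          Nat.sub_add_cancel (Nat.one_le_iff_ne_zero.mpr (NeZero.ne p)), a_pow_p]
      refine ⟨fun k => ?_, fun k => ?_⟩
      · rw [hh, tauA_a_pow, tauA_a_pow, zero_add]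
      · rw [hh, secA_a_pow]
        exact Subgroup.one_mem _
    · refine ⟨fun k => ?_, fun k => ?_⟩
      · have hbt : ∀ m, tauA (aut_b p)⁻¹ m = m := fun m => by
          have := tauA_inv_tauA (aut_b p) m
          rwa [tauA_b] at this
        rw [hbt, hbt, add_zero]
      · rw [secA_inv]
        exact Subgroup.inv_mem _ (hbs _)
  | mul x y hx hy ihx ihy =>
    obtain ⟨ihx1, ihx2⟩ := ihx
    obtain ⟨ihy1, ihy2⟩ := ihy
    refine ⟨fun k => ?_, fun k => ?_⟩
    · rw [tauA_mul, tauA_mul, ihx1 (tauA y k), ihx1 (tauA y 0), ihy1 k]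
      abel
    · rw [secA_mul]
      exact Subgroup.mul_mem _ (ihx2 _) (ihy2 _)

end Dev4
section Dev5
set_option linter.unusedSectionVars false
variable {p : ℕ} [NeZero p]

/-- The subgroup generated by the conjugates of `b`. -/
def Ngrp (p : ℕ) [NeZero p] : Subgroup (AutT p) := Subgroup.closure (Set.range (cgen (p := p)))

theorem a_conj_cgen (j : Fin p) : aut_a p * cgen j * (aut_a p)⁻¹ = cgen (j + 1) := by
  have hv : aut_a p ^ ((j + 1 : Fin p) : ℕ) = aut_a p ^ ((j : ℕ) + 1) := by
    rw [← a_pow_mod ((j : ℕ) + 1)]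
    congr 1
    rw [Fin.val_add, Fin.val_one']
    conv_lhs => rw [Nat.add_mod]
    conv_rhs => rw [Nat.add_mod]
    rw [Nat.mod_mod_of_dvd 1 (dvd_refl p)]
  rw [cgen, cgen, hv, pow_succ']
  group

theorem a_inv_conj_cgen (j : Fin p) : (aut_a p)⁻¹ * cgen j * aut_a p = cgen (j - 1) := by
  have := a_conj_cgen (p := p) (j - 1)
  rw [sub_add_cancel] at this
  rw [← this]
  group

theorem a_conj_mem_N : ∀ n ∈ Ngrp p, aut_a p * n * (aut_a p)⁻¹ ∈ Ngrp p := by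
  intro n hn
  induction hn using Subgroup.closure_induction'' with
  | one => simpa using Subgroup.one_mem _
  | mem x hx =>
    obtain ⟨j, rfl⟩ := hx
    rw [a_conj_cgen]
    exact Subgroup.subset_closure ⟨j + 1, rfl⟩
  | inv_mem x hx =>
    obtain ⟨j, rfl⟩ := hx
    have : aut_a p * (cgen j)⁻¹ * (aut_a p)⁻¹ = (aut_a p * cgen j * (aut_a p)⁻¹)⁻¹ := by group
    rw [this, a_conj_cgen]
    exact Subgroup.inv_mem _ (Subgroup.subset_closure ⟨j + 1, rfl⟩)
  | mul x y hx hy ihx ihy =>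
    have : aut_a p * (x * y) * (aut_a p)⁻¹
        = (aut_a p * x * (aut_a p)⁻¹) * (aut_a p * y * (aut_a p)⁻¹) := by group
    rw [this]
    exact Subgroup.mul_mem _ ihx ihy

theorem a_inv_conj_mem_N : ∀ n ∈ Ngrp p, (aut_a p)⁻¹ * n * aut_a p ∈ Ngrp p := by
  intro n hn
  induction hn using Subgroup.closure_induction'' with
  | one => simpa using Subgroup.one_mem _
  | mem x hx =>
    obtain ⟨j, rfl⟩ := hx
    rw [a_inv_conj_cgen]
    exact Subgroup.subset_closure ⟨j - 1, rfl⟩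
  | inv_mem x hx =>
    obtain ⟨j, rfl⟩ := hx
    have : (aut_a p)⁻¹ * (cgen j)⁻¹ * aut_a p = ((aut_a p)⁻¹ * cgen j * aut_a p)⁻¹ := by group
    rw [this, a_inv_conj_cgen]
    exact Subgroup.inv_mem _ (Subgroup.subset_closure ⟨j - 1, rfl⟩)
  | mul x y hx hy ihx ihy =>
    have : (aut_a p)⁻¹ * (x * y) * aut_a p
        = ((aut_a p)⁻¹ * x * aut_a p) * ((aut_a p)⁻¹ * y * aut_a p) := by group
    rw [this]
    exact Subgroup.mul_mem _ ihx ihy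

theorem a_zpow_conj_mem_N (k : ℤ) : ∀ n ∈ Ngrp p, aut_a p ^ k * n * (aut_a p ^ k)⁻¹ ∈ Ngrp p := by
  induction k using Int.induction_on with
  | zero => intro n hn; simpa using hn
  | succ i ih =>
    intro n hn
    have : aut_a p ^ ((i : ℤ) + 1) * n * (aut_a p ^ ((i : ℤ) + 1))⁻¹
        = aut_a p * (aut_a p ^ (i : ℤ) * n * (aut_a p ^ (i : ℤ))⁻¹) * (aut_a p)⁻¹ := by
      rw [zpow_add_one]
      group
    rw [this]
    exact a_conj_mem_N _ (ih n hn)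
  | pred i ih =>
    intro n hn
    have : aut_a p ^ (-(i : ℤ) - 1) * n * (aut_a p ^ (-(i : ℤ) - 1))⁻¹
        = (aut_a p)⁻¹ * (aut_a p ^ (-(i : ℤ)) * n * (aut_a p ^ (-(i : ℤ)))⁻¹) * aut_a p := by
      rw [zpow_sub_one]
      group
    rw [this]
    exact a_inv_conj_mem_N _ (ih n hn)

/-- Decomposition subgroup. -/
def Hdec (p : ℕ) [NeZero p] : Subgroup (AutT p) where
  carrier := {g | ∃ n ∈ Ngrp p, ∃ k : ℤ, g = n * aut_a p ^ k}
  one_mem' := ⟨1, Subgroup.one_mem _, 0, by simp⟩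
  mul_mem' := by
    rintro f g ⟨n₁, hn₁, k₁, rfl⟩ ⟨n₂, hn₂, k₂, rfl⟩
    refine ⟨n₁ * (aut_a p ^ k₁ * n₂ * (aut_a p ^ k₁)⁻¹), ?_, k₁ + k₂, by group⟩
    exact Subgroup.mul_mem _ hn₁ (a_zpow_conj_mem_N k₁ n₂ hn₂)
  inv_mem' := by
    rintro f ⟨n, hn, k, rfl⟩
    refine ⟨aut_a p ^ (-k) * n⁻¹ * (aut_a p ^ (-k))⁻¹, ?_, -k, by group⟩
    exact a_zpow_conj_mem_N (-k) n⁻¹ (Subgroup.inv_mem _ hn)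

theorem ggs_le_Hdec : GGS p ≤ Hdec p := by
  rw [GGS, Subgroup.closure_le]
  rintro x (rfl | rfl)
  · exact ⟨1, Subgroup.one_mem _, 1, by simp⟩
  · refine ⟨cgen 0, Subgroup.subset_closure ⟨0, rfl⟩, 0, ?_⟩
    simp [cgen]

theorem N_le_St : Ngrp p ≤ GGS p ⊓ lvlStab p 1 := by
  rw [Ngrp, Subgroup.closure_le]
  rintro x ⟨j, rfl⟩
  exact ⟨cgen_mem j, cgen_lvl j⟩

theorem a_pow_nat_lvl (m : ℕ) (h : aut_a p ^ m ∈ lvlStab p 1) : aut_a p ^ m = 1 := by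
  have h0 := h [(0 : Fin p)] rfl
  rw [a_pow_apply] at h0
  have : ((m : ℕ) : Fin p) = 0 := by
    have := List.head_eq_of_cons_eq h0
    rwa [zero_add] at this
  obtain ⟨d, rfl⟩ : p ∣ m := by exact_mod_cast Fin.natCast_eq_zero.mp this
  rw [pow_mul, a_pow_p, one_pow]

theorem a_zpow_lvl (k : ℤ) (h : aut_a p ^ k ∈ lvlStab p 1) : aut_a p ^ k = 1 := by
  cases k with
  | ofNat m =>
    rw [Int.ofNat_eq_coe, zpow_natCast] at h ⊢
    exact a_pow_nat_lvl m h
  | negSucc m =>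
    rw [zpow_negSucc] at h ⊢
    rw [a_pow_nat_lvl (m + 1) (by simpa using Subgroup.inv_mem _ h), inv_one]

theorem St_eq_closure : GGS p ⊓ lvlStab p 1 = Ngrp p := by
  refine le_antisymm ?_ N_le_St
  rintro g ⟨hg1, hg2⟩
  obtain ⟨n, hn, k, rfl⟩ := ggs_le_Hdec hg1
  have hnl : n ∈ lvlStab p 1 := (N_le_St hn).2
  have hak : aut_a p ^ k ∈ lvlStab p 1 := by
    have : aut_a p ^ k = n⁻¹ * (n * aut_a p ^ k) := by group
    rw [this]
    exact Subgroup.mul_mem _ (Subgroup.inv_mem _ hnl) hg2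
  rw [a_zpow_lvl k hak, mul_one]
  exact hn

end Dev5
section Dev6
set_option linter.unusedSectionVars false
variable {p : ℕ} [NeZero p]

/-- The root translation amount, in `ZMod p`. -/
def tZ (g : AutT p) : ZMod p := ((tauA g 0 : Fin p) : ℕ)

theorem valZ (x y : Fin p) : (((x + y : Fin p) : ℕ) : ZMod p) = ((x : ℕ) : ZMod p) + ((y : ℕ) : ZMod p) := by
  rw [Fin.val_add, ZMod.natCast_mod, Nat.cast_add]

theorem tZ_mul {f g : AutT p} (hf : f ∈ GGS p) (hg : g ∈ GGS p) :
    tZ (f * g) = tZ f + tZ g := by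
  have h1 : tauA (f * g) 0 = tauA g 0 + tauA f 0 := by
    rw [tauA_mul, (ggs_frac f hf).1 (tauA g 0)]
  rw [tZ, h1, valZ, tZ, tZ, add_comm]

theorem tZ_one : tZ (1 : AutT p) = 0 := by
  rw [tZ, tauA_one]
  simp

theorem tZ_a : tZ (aut_a p) = 1 := by
  rw [tZ, tauA_a, zero_add]
  rw [Fin.val_one', ZMod.natCast_mod, Nat.cast_one]

theorem tZ_b : tZ (aut_b p) = 0 := by
  rw [tZ, tauA_b]
  simp

/-- The total second-level label sum. -/
def Lam (g : AutT p) : ZMod p := ∑ k : Fin p, tZ (secA g k)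

theorem Lam_mul {f g : AutT p} (hf : f ∈ GGS p) (hg : g ∈ GGS p) :
    Lam (f * g) = Lam f + Lam g := by
  have h1 : ∀ k, tZ (secA (f * g) k) = tZ (secA f (tauA g k)) + tZ (secA g k) := by
    intro k
    rw [secA_mul, tZ_mul ((ggs_frac f hf).2 _) ((ggs_frac g hg).2 _)]
  rw [Lam, Finset.sum_congr rfl (fun k _ => h1 k), Finset.sum_add_distrib]
  congr 1
  have h2 : ∀ k : Fin p, tauA g k = k + tauA g 0 := (ggs_frac g hg).1
  calc ∑ k : Fin p, tZ (secA f (tauA g k))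
      = ∑ k : Fin p, tZ (secA f ((Equiv.addRight (tauA g 0)) k)) := by
        refine Finset.sum_congr rfl fun k _ => ?_
        rw [h2 k]; rfl
    _ = Lam f := Equiv.sum_comp (Equiv.addRight (tauA g 0)) (fun k => tZ (secA f k))

theorem Lam_one : Lam (1 : AutT p) = 0 := by
  rw [Lam]
  refine Finset.sum_eq_zero fun k _ => ?_
  rw [secA_one, tZ_one]

theorem Lam_a : Lam (aut_a p) = 0 := by
  rw [Lam]
  refine Finset.sum_eq_zero fun k _ => ?_
  rw [secA_a, tZ_one]

theorem Lam_b : Lam (aut_b p) = -1 := by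
  have hlt : p - 1 < p := Nat.sub_lt (Nat.pos_of_ne_zero (NeZero.ne p)) Nat.one_pos
  have h1 : ∀ k : Fin p, tZ (secA (aut_b p) k)
      = 1 - (if k = (⟨p - 1, hlt⟩ : Fin p) then (1 : ZMod p) else 0) := by
    intro k
    rw [secA_b]
    by_cases h : (k : ℕ) = p - 1
    · rw [if_pos h, if_pos (Fin.ext h), tZ_b]; ring
    · rw [if_neg h, if_neg (fun hh => h (by rw [hh])), tZ_a]; ring
  rw [Lam, Finset.sum_congr rfl (fun k _ => h1 k), Finset.sum_sub_distrib]
  rw [Finset.sum_const, Finset.card_univ, Fintype.card_fin, Finset.sum_ite_eq' Finset.univ _ (fun _ => (1 : ZMod p))]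
  simp [ZMod.natCast_self]

theorem cond_iff (k j : Fin p) : ((k - j : Fin p) : ℕ) = p - 1 ↔ j = k + 1 := by
  obtain ⟨q, rfl⟩ := Nat.exists_eq_succ_of_ne_zero (NeZero.ne p)
  have h1 : ((k - j : Fin (q + 1)) : ℕ) = q + 1 - 1 ↔ k - j = -1 := by
    rw [Fin.ext_iff, Fin.coe_neg_one]
    simp
  rw [h1, sub_eq_iff_eq_add]
  constructor
  · intro h; rw [h]; abel
  · intro h; rw [h]; abel

theorem tZ_sec_cgen (j k : Fin p) :
    tZ (secA (cgen j) k) = if j = k + 1 then 0 else 1 := by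
  rw [secA_cgen]
  by_cases h : ((k - j : Fin p) : ℕ) = p - 1
  · rw [if_pos h, if_pos ((cond_iff k j).mp h), tZ_b]
  · rw [if_neg h, if_neg (fun hh => h ((cond_iff k j).mpr hh)), tZ_a]

theorem Lam_sec_cgen (j k : Fin p) :
    Lam (secA (cgen j) k) = if j = k + 1 then -1 else 0 := by
  rw [secA_cgen]
  by_cases h : ((k - j : Fin p) : ℕ) = p - 1
  · rw [if_pos h, if_pos ((cond_iff k j).mp h), Lam_b]
  · rw [if_neg h, if_neg (fun hh => h ((cond_iff k j).mpr hh)), Lam_a]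

theorem tauA_of_lvl {g : AutT p} (hg : g ∈ lvlStab p 1) (k : Fin p) : tauA g k = k := by
  have h := hg [k] rfl
  rw [apply_singleton] at h
  exact List.head_eq_of_cons_eq h

/-- The `a`-exponent invariant of the `k`-th section, as a hom on `st_G(1)`. -/
def nuHom (k : Fin p) : ↥(GGS p ⊓ lvlStab p 1) →* Multiplicative (ZMod p) where
  toFun g := Multiplicative.ofAdd (tZ (secA g.1 k))
  map_one' := by
    show Multiplicative.ofAdd (tZ (secA ((1 : ↥(GGS p ⊓ lvlStab p 1)) : AutT p) k)) = 1
    rw [show ((1 : ↥(GGS p ⊓ lvlStab p 1)) : AutT p) = 1 from rfl, secA_one, tZ_one]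
    rfl
  map_mul' f g := by
    have hc : ((f * g : ↥(GGS p ⊓ lvlStab p 1)) : AutT p) = f.1 * g.1 := rfl
    have hfG : f.1 ∈ GGS p := f.2.1
    have hgG : g.1 ∈ GGS p := g.2.1
    have hgl : g.1 ∈ lvlStab p 1 := g.2.2
    simp only [hc, secA_mul, tauA_of_lvl hgl k]
    rw [tZ_mul ((ggs_frac f.1 hfG).2 k) ((ggs_frac g.1 hgG).2 k)]
    rfl

/-- The `b`-exponent invariant of the `k`-th section, as a hom on `st_G(1)`. -/
def muHom (k : Fin p) : ↥(GGS p ⊓ lvlStab p 1) →* Multiplicative (ZMod p) where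
  toFun g := Multiplicative.ofAdd (Lam (secA g.1 k))
  map_one' := by
    show Multiplicative.ofAdd (Lam (secA ((1 : ↥(GGS p ⊓ lvlStab p 1)) : AutT p) k)) = 1
    rw [show ((1 : ↥(GGS p ⊓ lvlStab p 1)) : AutT p) = 1 from rfl, secA_one, Lam_one]
    rfl
  map_mul' f g := by
    have hc : ((f * g : ↥(GGS p ⊓ lvlStab p 1)) : AutT p) = f.1 * g.1 := rfl
    have hfG : f.1 ∈ GGS p := f.2.1
    have hgG : g.1 ∈ GGS p := g.2.1
    have hgl : g.1 ∈ lvlStab p 1 := g.2.2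
    simp only [hc, secA_mul, tauA_of_lvl hgl k]
    rw [Lam_mul ((ggs_frac f.1 hfG).2 k) ((ggs_frac g.1 hgG).2 k)]
    rfl

end Dev6
section Dev7
set_option linter.unusedSectionVars false
set_option linter.unusedVariables false
variable {p : ℕ} [NeZero p]

/-- The generators of `st_G(1)` as elements of the subgroup. -/
def cSt (j : Fin p) : ↥(GGS p ⊓ lvlStab p 1) := ⟨cgen j, cgen_mem j, cgen_lvl j⟩

theorem repr_ab : ∀ (g : AutT p) (hg : g ∈ GGS p ⊓ lvlStab p 1), ∃ i : Fin p → ℤ,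
    Abelianization.of (⟨g, hg⟩ : ↥(GGS p ⊓ lvlStab p 1))
      = ∏ j : Fin p, (Abelianization.of (cSt (p := p) j)) ^ (i j) := by
  have key : ∀ (g : AutT p), g ∈ Ngrp p → ∀ (hg : g ∈ GGS p ⊓ lvlStab p 1), ∃ i : Fin p → ℤ,
      Abelianization.of (⟨g, hg⟩ : ↥(GGS p ⊓ lvlStab p 1))
        = ∏ j : Fin p, (Abelianization.of (cSt (p := p) j)) ^ (i j) := by
    intro g hgN
    induction hgN using Subgroup.closure_induction'' with
    | one =>
      intro hg
      refine ⟨0, ?_⟩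
      have h1 : (⟨1, hg⟩ : ↥(GGS p ⊓ lvlStab p 1)) = 1 := rfl
      rw [h1, map_one]
      simp
    | mem x hx =>
      obtain ⟨j, rfl⟩ := hx
      intro hg
      refine ⟨fun j' => if j' = j then 1 else 0, ?_⟩
      have h1 : (⟨cgen j, hg⟩ : ↥(GGS p ⊓ lvlStab p 1)) = cSt j := rfl
      rw [h1]
      rw [Finset.prod_congr rfl (fun j' _ => show (Abelianization.of (cSt (p := p) j')) ^ (if j' = j then (1:ℤ) else 0) = (if j' = j then Abelianization.of (cSt (p := p) j') else 1) by split_ifs <;> simp)]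
      rw [Finset.prod_ite_eq' Finset.univ j (fun j' => Abelianization.of (cSt (p := p) j'))]
      simp
    | inv_mem x hx =>
      obtain ⟨j, rfl⟩ := hx
      intro hg
      refine ⟨fun j' => if j' = j then -1 else 0, ?_⟩
      have h1 : (⟨(cgen j)⁻¹, hg⟩ : ↥(GGS p ⊓ lvlStab p 1)) = (cSt j)⁻¹ := rfl
      rw [h1, map_inv]
      rw [Finset.prod_congr rfl (fun j' _ => show (Abelianization.of (cSt (p := p) j')) ^ (if j' = j then (-1:ℤ) else 0) = (if j' = j then (Abelianization.of (cSt (p := p) j'))⁻¹ else 1) by split_ifs <;> simp)]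
      rw [Finset.prod_ite_eq' Finset.univ j (fun j' => (Abelianization.of (cSt (p := p) j'))⁻¹)]
      simp
    | mul x y hx hy ihx ihy =>
      intro hg
      obtain ⟨i₁, hi₁⟩ := ihx (N_le_St hx)
      obtain ⟨i₂, hi₂⟩ := ihy (N_le_St hy)
      refine ⟨i₁ + i₂, ?_⟩
      have h1 : (⟨x * y, hg⟩ : ↥(GGS p ⊓ lvlStab p 1))
          = (⟨x, N_le_St hx⟩ : ↥(GGS p ⊓ lvlStab p 1)) * ⟨y, N_le_St hy⟩ := rfl
      rw [h1, map_mul, hi₁, hi₂, ← Finset.prod_mul_distrib]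
      refine Finset.prod_congr rfl fun j _ => ?_
      rw [Pi.add_apply, zpow_add]
  intro g hg
  exact key g (St_eq_closure (p := p) ▸ hg) hg

theorem not_prefix_single {x k : Fin p} (h : k ≠ x) (w : Vert p) : ¬ ([x] <+: (k :: w)) := by
  intro hc
  rcases List.cons_prefix_cons.mp hc with ⟨rfl, -⟩
  exact h rfl

theorem rist_lvl {g : AutT p} {x : Fin p} (hgR : g ∈ rigid p [x]) : g ∈ lvlStab p 1 := by
  intro v hv
  match v, hv with
  | [k], _ =>
    by_cases hk : k = x
    · subst hk
      by_cases ht : tauA g k = k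
      · rw [apply_singleton, ht]
      · exfalso
        have hginv : g⁻¹ ∈ rigid p [k] := Subgroup.inv_mem _ hgR
        have h2 : (g⁻¹ : AutT p).1 [tauA g k] = [tauA g k] :=
          hginv [tauA g k] (not_prefix_single ht [])
        have h3 : (g⁻¹ : AutT p).1 ((g : AutT p).1 [k]) = [k] := by
          show ((g⁻¹ * g : AutT p) : Equiv.Perm (Vert p)) [k] = [k]
          rw [inv_mul_cancel]
          rfl
        rw [apply_singleton g k, h2] at h3
        exact ht (List.head_eq_of_cons_eq h3)
    · exact hgR [k] (not_prefix_single hk [])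

theorem sec_rist_one {g : AutT p} {x : Fin p} (hgR : g ∈ rigid p [x]) {k : Fin p}
    (hk : k ≠ x) : secA g k = 1 := by
  apply Subtype.ext; apply Equiv.ext; intro w
  show secP g k w = w
  rw [secP, hgR (k :: w) (not_prefix_single hk w)]
  rfl

theorem prod_hom_eval (φ : ↥(GGS p ⊓ lvlStab p 1) →* Multiplicative (ZMod p))
    {g : AutT p} (hg : g ∈ GGS p ⊓ lvlStab p 1) (i : Fin p → ℤ)
    (h : Abelianization.of (⟨g, hg⟩ : ↥(GGS p ⊓ lvlStab p 1))
      = ∏ j : Fin p, (Abelianization.of (cSt (p := p) j)) ^ (i j)) :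
    φ ⟨g, hg⟩ = ∏ j : Fin p, (φ (cSt (p := p) j)) ^ (i j) := by
  have := congrArg (Abelianization.lift φ) h
  rw [Abelianization.lift_apply_of] at this
  rw [this, map_prod]
  refine Finset.prod_congr rfl fun j _ => ?_
  rw [map_zpow, Abelianization.lift_apply_of]

end Dev7
section Dev8
set_option linter.unusedSectionVars false
set_option linter.unusedVariables false
variable {p : ℕ} [NeZero p]

theorem hom_eval_add (φ : ↥(GGS p ⊓ lvlStab p 1) →* Multiplicative (ZMod p))
    {g : AutT p} (hg : g ∈ GGS p ⊓ lvlStab p 1) (i : Fin p → ℤ)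
    (h : Abelianization.of (⟨g, hg⟩ : ↥(GGS p ⊓ lvlStab p 1))
      = ∏ j : Fin p, (Abelianization.of (cSt (p := p) j)) ^ (i j)) :
    (φ ⟨g, hg⟩).toAdd = ∑ j : Fin p, i j • (φ (cSt (p := p) j)).toAdd := by
  have h1 := prod_hom_eval φ hg i h
  have h2 : ∏ j : Fin p, (φ (cSt (p := p) j)) ^ (i j)
      = Multiplicative.ofAdd (∑ j : Fin p, i j • (φ (cSt (p := p) j)).toAdd) := by
    rw [ofAdd_sum]
    refine Finset.prod_congr rfl fun j _ => ?_
    rfl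
  rw [h1, h2]
  rfl

theorem part1 (hp : p.Prime) (x : Fin p) :
    ristV (GGS p) [x] ≤ ⁅GGS p ⊓ lvlStab p 1, GGS p ⊓ lvlStab p 1⁆ := by
  rintro g ⟨hgG, hgR⟩
  have hSt : g ∈ GGS p ⊓ lvlStab p 1 := ⟨hgG, rist_lvl hgR⟩
  obtain ⟨i, hi⟩ := repr_ab g hSt
  have hmu : ∀ k : Fin p, k ≠ x → ((i (k + 1) : ℤ) : ZMod p) = 0 := by
    intro k hk
    have h := hom_eval_add (muHom k) hSt i hi
    have hL : ((muHom (p := p) k) ⟨g, hSt⟩).toAdd = 0 := by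
      show (Multiplicative.ofAdd (Lam (secA g k))).toAdd = 0
      rw [sec_rist_one hgR hk, Lam_one]
      rfl
    have hR : ∀ j : Fin p, ((muHom (p := p) k) (cSt (p := p) j)).toAdd
        = (if j = k + 1 then (-1 : ZMod p) else 0) := fun j => by
      show (Multiplicative.ofAdd (Lam (secA (cgen j) k))).toAdd = _
      rw [Lam_sec_cgen]
      rfl
    rw [hL, Finset.sum_congr rfl (fun j _ => by rw [hR j])] at h
    rw [Finset.sum_eq_single (k + 1) (fun j _ hj => by rw [if_neg hj, smul_zero])
      (fun hmem => absurd (Finset.mem_univ _) hmem)] at h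
    rw [if_pos rfl, zsmul_eq_mul] at h
    have h2 := h.symm
    rw [mul_neg_one, neg_eq_zero] at h2
    exact h2
  have hone : (1 : Fin p) ≠ 0 := by
    intro hc
    have h1 : ((1 : ℕ) : Fin p) = 0 := by rwa [Nat.cast_one]
    have h2 : p ∣ 1 := by exact_mod_cast Fin.natCast_eq_zero.mp h1
    have h3 := Nat.le_of_dvd Nat.one_pos h2
    have h4 := hp.two_le
    omega
  have hk0 : x + 1 ≠ x := by
    intro hc
    apply hone
    have : x + 1 = x + 0 := by rw [add_zero]; exact hc
    exact add_left_cancel this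
  have hnu : ((i (x + 1) : ℤ) : ZMod p) = 0 := by
    have h := hom_eval_add (nuHom (x + 1)) hSt i hi
    have hL : ((nuHom (p := p) (x + 1)) ⟨g, hSt⟩).toAdd = 0 := by
      show (Multiplicative.ofAdd (tZ (secA g (x + 1)))).toAdd = 0
      rw [sec_rist_one hgR hk0, tZ_one]
      rfl
    have hR : ∀ j : Fin p, ((nuHom (p := p) (x + 1)) (cSt (p := p) j)).toAdd
        = (if j = (x + 1) + 1 then (0 : ZMod p) else 1) := fun j => by
      show (Multiplicative.ofAdd (tZ (secA (cgen j) (x + 1)))).toAdd = _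
      rw [tZ_sec_cgen]
      rfl
    rw [hL, Finset.sum_congr rfl (fun j _ => by rw [hR j])] at h
    have hside : ∀ j ∈ Finset.univ, j ≠ x + 1 →
        i j • (if j = (x + 1) + 1 then (0 : ZMod p) else 1) = 0 := by
      intro j _ hj
      have hj1 : j - 1 ≠ x := by
        intro hc
        apply hj
        rw [← hc, sub_add_cancel]
      have h3 := hmu (j - 1) hj1
      rw [sub_add_cancel] at h3
      rcases eq_or_ne j ((x + 1) + 1) with hc | hc
      · rw [if_pos hc, smul_zero]
      · rw [if_neg hc, zsmul_eq_mul, h3, zero_mul]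
    rw [Finset.sum_eq_single (x + 1) hside
      (fun hmem => absurd (Finset.mem_univ _) hmem)] at h
    have hcond : ¬ (x + 1 = (x + 1) + 1) := by
      intro hc
      apply hone
      have h5 : (x + 1) + 0 = (x + 1) + 1 := by rw [add_zero]; exact hc
      exact (add_left_cancel h5).symm
    rw [if_neg hcond, zsmul_eq_mul, mul_one] at h
    exact h.symm
  have hall : ∀ j : Fin p, (p : ℤ) ∣ i j := by
    intro j
    rw [← ZMod.intCast_zmod_eq_zero_iff_dvd]
    rcases eq_or_ne j (x + 1) with hj | hj
    · rw [hj]; exact hnu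
    · have hj1 : j - 1 ≠ x := by
        intro hc
        apply hj
        rw [← hc, sub_add_cancel]
      have h3 := hmu (j - 1) hj1
      rwa [sub_add_cancel] at h3
  have hfac : ∀ j : Fin p, (Abelianization.of (cSt (p := p) j)) ^ (i j) = 1 := by
    intro j
    obtain ⟨m, hm⟩ := hall j
    have hcp : (cSt (p := p) j) ^ p = 1 := by
      apply Subtype.ext
      show ((cSt (p := p) j : AutT p)) ^ p = 1
      exact cgen_pow_p j
    rw [hm, zpow_mul, zpow_natCast, ← map_pow, hcp, map_one, one_zpow]
  rw [Finset.prod_congr rfl (fun j _ => hfac j), Finset.prod_const_one] at hi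
  have hcomm : (⟨g, hSt⟩ : ↥(GGS p ⊓ lvlStab p 1))
      ∈ ⁅(⊤ : Subgroup ↥(GGS p ⊓ lvlStab p 1)), (⊤ : Subgroup ↥(GGS p ⊓ lvlStab p 1))⁆ := by
    have := (QuotientGroup.eq_one_iff
      (⟨g, hSt⟩ : ↥(GGS p ⊓ lvlStab p 1))).mp hi
    rwa [commutator_def] at this
  have hmap : ⁅GGS p ⊓ lvlStab p 1, GGS p ⊓ lvlStab p 1⁆
      = Subgroup.map (GGS p ⊓ lvlStab p 1).subtype
          ⁅(⊤ : Subgroup ↥(GGS p ⊓ lvlStab p 1)), (⊤ : Subgroup ↥(GGS p ⊓ lvlStab p 1))⁆ := by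
    rw [Subgroup.map_commutator, ← MonoidHom.range_eq_map, Subgroup.range_subtype]
  rw [hmap]
  exact ⟨⟨g, hSt⟩, hcomm, rfl⟩

end Dev8
section Dev9
set_option linter.unusedSectionVars false
set_option linter.unusedVariables false
variable {p : ℕ} [NeZero p]

theorem K_conj : ∀ g ∈ GGS p, ∀ n ∈ GGSK p, g * n * g⁻¹ ∈ GGSK p := by
  intro g hg n hn
  induction hn using Subgroup.closure_induction'' with
  | one => simpa using Subgroup.one_mem _
  | mem x hx =>
    obtain ⟨g', hg', rfl⟩ := hx
    refine Subgroup.subset_closure ⟨g * g', Subgroup.mul_mem _ hg hg', ?_⟩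
    group
  | inv_mem x hx =>
    obtain ⟨g', hg', rfl⟩ := hx
    have he : g * (g' * (aut_b p * (aut_a p)⁻¹) * g'⁻¹)⁻¹ * g⁻¹
        = (g * (g' * (aut_b p * (aut_a p)⁻¹) * g'⁻¹) * g⁻¹)⁻¹ := by group
    rw [he]
    refine Subgroup.inv_mem _ (Subgroup.subset_closure ⟨g * g', Subgroup.mul_mem _ hg hg', ?_⟩)
    group
  | mul x y hx hy ihx ihy =>
    have he : g * (x * y) * g⁻¹ = (g * x * g⁻¹) * (g * y * g⁻¹) := by group
    rw [he]
    exact Subgroup.mul_mem _ ihx ihy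

theorem ggs_decomp : ∀ g ∈ GGS p, ∃ k : ℤ, g * (aut_a p ^ k)⁻¹ ∈ GGSK p := by
  intro g hg
  induction hg using Subgroup.closure_induction'' with
  | one => exact ⟨0, by simpa using Subgroup.one_mem _⟩
  | mem x hx =>
    rcases hx with rfl | rfl
    · exact ⟨1, by simpa using Subgroup.one_mem _⟩
    · refine ⟨1, ?_⟩
      refine Subgroup.subset_closure ⟨1, Subgroup.one_mem _, ?_⟩
      group
  | inv_mem x hx =>
    rcases hx with rfl | rfl
    · exact ⟨-1, by simpa using Subgroup.one_mem _⟩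
    · refine ⟨-1, ?_⟩
      have he : (aut_b p)⁻¹ * (aut_a p ^ (-1 : ℤ))⁻¹
          = (aut_b p)⁻¹ * (1 * (aut_b p * (aut_a p)⁻¹) * 1⁻¹)⁻¹ * ((aut_b p)⁻¹)⁻¹ := by
        group
      rw [he]
      exact K_conj _ (Subgroup.inv_mem _ b_mem) _
        (Subgroup.inv_mem _ (Subgroup.subset_closure ⟨1, Subgroup.one_mem _, rfl⟩))
  | mul x y hx hy ihx ihy =>
    obtain ⟨k₁, hk₁⟩ := ihx
    obtain ⟨k₂, hk₂⟩ := ihy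
    refine ⟨k₁ + k₂, ?_⟩
    have he : x * y * (aut_a p ^ (k₁ + k₂))⁻¹
        = (x * (y * (aut_a p ^ k₂)⁻¹) * x⁻¹) * (x * (aut_a p ^ k₁)⁻¹) := by
      rw [zpow_add]
      group
    rw [he]
    exact Subgroup.mul_mem _ (K_conj x hx _ hk₂) hk₁

theorem ggs_comm_le_K : ⁅GGS p, GGS p⁆ ≤ GGSK p := by
  rw [Subgroup.commutator_le]
  intro g₁ hg₁ g₂ hg₂
  obtain ⟨k₁, hk₁⟩ := ggs_decomp g₁ hg₁
  obtain ⟨k₂, hk₂⟩ := ggs_decomp g₂ hg₂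
  have hm₁ : g₁ * g₂ * (aut_a p ^ (k₁ + k₂))⁻¹ ∈ GGSK p := by
    have he : g₁ * g₂ * (aut_a p ^ (k₁ + k₂))⁻¹
        = (g₁ * (g₂ * (aut_a p ^ k₂)⁻¹) * g₁⁻¹) * (g₁ * (aut_a p ^ k₁)⁻¹) := by
      rw [zpow_add]
      group
    rw [he]
    exact Subgroup.mul_mem _ (K_conj g₁ hg₁ _ hk₂) hk₁
  have hm₂ : g₂ * g₁ * (aut_a p ^ (k₁ + k₂))⁻¹ ∈ GGSK p := by
    have he : g₂ * g₁ * (aut_a p ^ (k₁ + k₂))⁻¹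
        = (g₂ * (g₁ * (aut_a p ^ k₁)⁻¹) * g₂⁻¹) * (g₂ * (aut_a p ^ k₂)⁻¹) := by
      rw [zpow_add]
      group
    rw [he]
    exact Subgroup.mul_mem _ (K_conj g₂ hg₂ _ hk₁) hk₂
  have he : ⁅g₁, g₂⁆ = (g₁ * g₂ * (aut_a p ^ (k₁ + k₂))⁻¹)
      * (g₂ * g₁ * (aut_a p ^ (k₁ + k₂))⁻¹)⁻¹ := by
    rw [commutatorElement_def]
    group
  rw [he]
  exact Subgroup.mul_mem _ hm₁ (Subgroup.inv_mem _ hm₂)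

theorem part2 (hp : p.Prime) : ristL (GGS p) 1 ≤ GGSK p := by
  rw [ristL]
  refine iSup_le fun u => iSup_le fun hu => ?_
  have hlen : u.length = 1 := hu
  match u, hlen with
  | [x], _ =>
    calc ristV (GGS p) [x] ≤ ⁅GGS p ⊓ lvlStab p 1, GGS p ⊓ lvlStab p 1⁆ := part1 hp x
      _ ≤ ⁅GGS p, GGS p⁆ := Subgroup.commutator_mono inf_le_left inf_le_left
      _ ≤ GGSK p := ggs_comm_le_K

end Dev9

/-- for the GGS-group `G` with constant defining vector (`p` an odd
prime), the rigid stabilizer of every first-level vertex is contained in the derived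
subgroup of the first-level stabilizer `st_G(1)`, and consequently
`rst_G(1) ≤ K = ⟨ba⁻¹⟩^G`. -/
theorem stmt_11 (p : ℕ) [NeZero p] (hp : p.Prime) (hodd : Odd p) :
    (∀ x : Fin p, ristV (GGS p) [x] ≤
      ⁅GGS p ⊓ lvlStab p 1, GGS p ⊓ lvlStab p 1⁆) ∧
    ristL (GGS p) 1 ≤ GGSK p := by
  exact ⟨fun x => part1 hp x, part2 hp⟩
end

section
/- For the Basilica group G, the second derived subgroup satisfies ψ(G'') = γ₃(G) × γ₃(G), where γ₃(G) is the third term of the lower central series. -/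
section Basilica

/-- The two generators of the Basilica group, defined by mutual recursion:
`bas false` is the action of `a = (1, b)` and `bas true` is the action of
`b = (1, a)ε` on the binary tree. -/
def bas : Bool → List (Fin 2) → List (Fin 2)
  | _, [] => []
  | false, x :: w => if x = 0 then 0 :: w else 1 :: bas true w
  | true, x :: w => if x = 0 then 1 :: w else 0 :: bas false w

/-- The inverses of the two generators of the Basilica group. -/
def basI : Bool → List (Fin 2) → List (Fin 2)
  | _, [] => []
  | false, x :: w => if x = 0 then 0 :: w else 1 :: basI true w
  | true, x :: w => if x = 0 then 1 :: basI false w else 0 :: w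

theorem fin2_eq_one {x : Fin 2} (h : ¬ x = 0) : x = 1 := by omega

theorem basI_bas : ∀ (fl : Bool) (l : List (Fin 2)), basI fl (bas fl l) = l
  | false, [] => rfl
  | true, [] => rfl
  | false, x :: w => by
    by_cases h : x = 0
    · simp [bas, basI, h]
    · simp [bas, basI, h, fin2_eq_one h, basI_bas true w]
  | true, x :: w => by
    by_cases h : x = 0
    · simp [bas, basI, h]
    · simp [bas, basI, h, fin2_eq_one h, basI_bas false w]

theorem bas_basI : ∀ (fl : Bool) (l : List (Fin 2)), bas fl (basI fl l) = l
  | false, [] => rfl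
  | true, [] => rfl
  | false, x :: w => by
    by_cases h : x = 0
    · simp [bas, basI, h]
    · simp [bas, basI, h, fin2_eq_one h, bas_basI true w]
  | true, x :: w => by
    by_cases h : x = 0
    · simp [bas, basI, h, bas_basI false w]
    · simp [bas, basI, h, fin2_eq_one h]

/-- The generators of the Basilica group as permutations of the vertex set. -/
def basPerm (fl : Bool) : Equiv.Perm (Vert 2) :=
  ⟨bas fl, basI fl, basI_bas fl, bas_basI fl⟩

theorem bas_append : ∀ (fl : Bool) (v : Vert 2) (i : Fin 2),
    ∃ j, bas fl (v ++ [i]) = bas fl v ++ [j]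
  | false, [], i => by
    by_cases h : i = 0
    · exact ⟨i, by simp [bas, h]⟩
    · exact ⟨i, by simp [bas, h, fin2_eq_one h]⟩
  | true, [], i => by
    by_cases h : i = 0
    · exact ⟨1, by simp [bas, h]⟩
    · exact ⟨0, by simp [bas, h, fin2_eq_one h]⟩
  | false, x :: w, i => by
    by_cases h : x = 0
    · exact ⟨i, by simp [bas, h]⟩
    · obtain ⟨j, hj⟩ := bas_append true w i
      exact ⟨j, by simp [bas, h, fin2_eq_one h, hj]⟩
  | true, x :: w, i => by
    by_cases h : x = 0
    · exact ⟨i, by simp [bas, h]⟩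
    · obtain ⟨j, hj⟩ := bas_append false w i
      exact ⟨j, by simp [bas, h, fin2_eq_one h, hj]⟩

theorem basI_append : ∀ (fl : Bool) (v : Vert 2) (i : Fin 2),
    ∃ j, basI fl (v ++ [i]) = basI fl v ++ [j]
  | false, [], i => by
    by_cases h : i = 0
    · exact ⟨i, by simp [basI, h]⟩
    · exact ⟨i, by simp [basI, h, fin2_eq_one h]⟩
  | true, [], i => by
    by_cases h : i = 0
    · exact ⟨1, by simp [basI, h]⟩
    · exact ⟨0, by simp [basI, h, fin2_eq_one h]⟩
  | false, x :: w, i => by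
    by_cases h : x = 0
    · exact ⟨i, by simp [basI, h]⟩
    · obtain ⟨j, hj⟩ := basI_append true w i
      exact ⟨j, by simp [basI, h, fin2_eq_one h, hj]⟩
  | true, x :: w, i => by
    by_cases h : x = 0
    · obtain ⟨j, hj⟩ := basI_append false w i
      exact ⟨j, by simp [basI, h, hj]⟩
    · exact ⟨i, by simp [basI, h, fin2_eq_one h]⟩

/-- The generator `a = (1, b)` of the Basilica group, as a tree automorphism. -/
def bas_a : AutT 2 := ⟨basPerm false, bas_append false, basI_append false⟩

/-- The generator `b = (1, a)ε` of the Basilica group, as a tree automorphism. -/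
def bas_b : AutT 2 := ⟨basPerm true, bas_append true, basI_append true⟩

/-- The Basilica group `G = ⟨a, b⟩`. -/
def Basilica : Subgroup (AutT 2) :=
  Subgroup.closure {bas_a, bas_b}

/-- The normal closure `⟨a⟩^G` of `a` in the Basilica group. -/
def BasA : Subgroup (AutT 2) :=
  Subgroup.closure {x | ∃ g ∈ Basilica, x = g * bas_a * g⁻¹}

/-- The normal closure `⟨b⟩^G` of `b` in the Basilica group. -/
def BasB : Subgroup (AutT 2) :=
  Subgroup.closure {x | ∃ g ∈ Basilica, x = g * bas_b * g⁻¹}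

end Basilica

open scoped commutatorElement

namespace Stmt16
open Subgroup

lemma AutT_ext {d : ℕ} {f g : AutT d}
    (h : ∀ v, (f : Equiv.Perm (Vert d)) v = (g : Equiv.Perm (Vert d)) v) : f = g :=
  Subtype.ext (Equiv.ext h)

lemma mapsChildren_of_mem {d : ℕ} (f : AutT d) : MapsChildren (f : Equiv.Perm (Vert d)) :=
  f.2.1

lemma mapsChildren_symm_of_mem {d : ℕ} (f : AutT d) :
    MapsChildren (f : Equiv.Perm (Vert d)).symm := f.2.2

lemma root_fixed {d : ℕ} (f : AutT d) : (f : Equiv.Perm (Vert d)) [] = [] := by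
  rcases List.eq_nil_or_concat ((f : Equiv.Perm (Vert d)) []) with h | ⟨v, i, h⟩
  · exact h
  · obtain ⟨j, hj⟩ := mapsChildren_symm_of_mem f v i
    have h2 : (f : Equiv.Perm (Vert d)).symm ((f : Equiv.Perm (Vert d)) []) = [] :=
      Equiv.symm_apply_apply _ _
    rw [List.concat_eq_append] at h
    rw [h, hj] at h2
    exact absurd h2 (by simp)

/-- the underlying function of the pairing -/
def pf (g h : Vert 2 → Vert 2) : Vert 2 → Vert 2
  | [] => []
  | x :: w => x :: (if x = 0 then g w else h w)

lemma pf_inv (g g' h h' : Vert 2 → Vert 2) (hg : ∀ w, g' (g w) = w)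
    (hh : ∀ w, h' (h w) = w) : ∀ l, pf g' h' (pf g h l) = l := by
  rintro (_ | ⟨x, w⟩)
  · rfl
  · by_cases hx : x = 0 <;> simp [pf, hx, hg, hh]

/-- the pairing as a permutation -/
def pairP (g h : Equiv.Perm (Vert 2)) : Equiv.Perm (Vert 2) where
  toFun := pf g h
  invFun := pf g.symm h.symm
  left_inv := pf_inv g g.symm h h.symm (fun w => g.symm_apply_apply w)
    (fun w => h.symm_apply_apply w)
  right_inv := pf_inv g.symm g h.symm h (fun w => g.apply_symm_apply w)
    (fun w => h.apply_symm_apply w)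

lemma pf_mapsChildren (g h : Equiv.Perm (Vert 2)) (hg : MapsChildren g)
    (hh : MapsChildren h) (hgr : g [] = []) (hhr : h [] = []) :
    MapsChildren (pairP g h) := by
  rintro (_ | ⟨x, w⟩) i
  · refine ⟨i, ?_⟩
    show pf g h [i] = pf g h [] ++ [i]
    by_cases hi : i = 0 <;> simp [pf, hi, hgr, hhr]
  · by_cases hx : x = 0
    · obtain ⟨j, hj⟩ := hg w i
      exact ⟨j, by simp [pairP, pf, hx, hj]⟩
    · obtain ⟨j, hj⟩ := hh w i
      exact ⟨j, by simp [pairP, pf, hx, hj]⟩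

lemma root_fixed_symm {d : ℕ} (f : AutT d) : (f : Equiv.Perm (Vert d)).symm [] = [] :=
  (Equiv.symm_apply_eq _).mpr (root_fixed f).symm

/-- the pairing `ψ⁻¹(g, h)` as a tree automorphism -/
def pair (g h : AutT 2) : AutT 2 :=
  ⟨pairP g h,
   pf_mapsChildren _ _ (mapsChildren_of_mem g) (mapsChildren_of_mem h)
     (root_fixed g) (root_fixed h),
   pf_mapsChildren _ _ (mapsChildren_symm_of_mem g) (mapsChildren_symm_of_mem h)
     (root_fixed_symm g) (root_fixed_symm h)⟩

lemma pair_apply_nil (g h : AutT 2) : ((pair g h : AutT 2) : Equiv.Perm (Vert 2)) [] = [] := rfl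

lemma pair_apply_zero (g h : AutT 2) (w : Vert 2) :
    ((pair g h : AutT 2) : Equiv.Perm (Vert 2)) (0 :: w) = 0 :: (g : Equiv.Perm (Vert 2)) w := by
  show pf _ _ (0 :: w) = _
  simp [pf]

lemma pair_apply_one (g h : AutT 2) (w : Vert 2) :
    ((pair g h : AutT 2) : Equiv.Perm (Vert 2)) (1 :: w) = 1 :: (h : Equiv.Perm (Vert 2)) w := by
  show pf _ _ (1 :: w) = _
  simp [pf]

/-- the swap `ε` at the root -/
def sw : Vert 2 → Vert 2
  | [] => []
  | x :: w => (if x = 0 then 1 else 0) :: w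

lemma sw_sw : ∀ l, sw (sw l) = l := by
  rintro (_ | ⟨x, w⟩)
  · rfl
  · by_cases hx : x = 0 <;> simp [sw, hx, fin2_eq_one]

def swP : Equiv.Perm (Vert 2) := ⟨sw, sw, sw_sw, sw_sw⟩

lemma sw_mapsChildren : MapsChildren swP := by
  rintro (_ | ⟨x, w⟩) i
  · exact ⟨if i = 0 then 1 else 0, rfl⟩
  · exact ⟨i, by show sw (x :: (w ++ [i])) = sw (x :: w) ++ [i]; simp [sw]⟩

/-- the root swap as a tree automorphism -/
def σ : AutT 2 := ⟨swP, sw_mapsChildren, sw_mapsChildren⟩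

lemma σ_apply_zero (w : Vert 2) : ((σ : AutT 2) : Equiv.Perm (Vert 2)) (0 :: w) = 1 :: w := by
  show sw (0 :: w) = _; simp [sw]

lemma σ_apply_one (w : Vert 2) : ((σ : AutT 2) : Equiv.Perm (Vert 2)) (1 :: w) = 0 :: w := by
  show sw (1 :: w) = _; simp [sw]

lemma σ_apply_nil : ((σ : AutT 2) : Equiv.Perm (Vert 2)) [] = [] := rfl

end Stmt16

namespace Stmt16

lemma mul_apply (f g : AutT 2) (v : Vert 2) :
    ((f * g : AutT 2) : Equiv.Perm (Vert 2)) v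
      = (f : Equiv.Perm (Vert 2)) ((g : Equiv.Perm (Vert 2)) v) := rfl

lemma one_apply (v : Vert 2) : ((1 : AutT 2) : Equiv.Perm (Vert 2)) v = v := rfl

lemma vert_cases (P : Vert 2 → Prop) (h0 : P []) (h1 : ∀ w, P (0 :: w))
    (h2 : ∀ w, P (1 :: w)) : ∀ v, P v := by
  rintro (_ | ⟨x, w⟩)
  · exact h0
  · by_cases hx : x = 0
    · rw [hx]; exact h1 w
    · rw [fin2_eq_one hx]; exact h2 w

lemma pair_mul (x y u v : AutT 2) : pair x y * pair u v = pair (x * u) (y * v) := by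
  refine AutT_ext (vert_cases _ rfl (fun w => ?_) (fun w => ?_)) <;>
    simp [mul_apply, pair_apply_zero, pair_apply_one]

lemma pair_one : pair (1 : AutT 2) 1 = 1 := by
  refine AutT_ext (vert_cases _ rfl (fun w => ?_) (fun w => ?_)) <;>
    simp [pair_apply_zero, pair_apply_one, one_apply]

lemma pair_inv (x y : AutT 2) : (pair x y)⁻¹ = pair x⁻¹ y⁻¹ := by
  rw [inv_eq_iff_mul_eq_one, pair_mul, mul_inv_cancel, mul_inv_cancel, pair_one]

lemma σ_mul_pair (x y : AutT 2) : σ * pair x y = pair y x * σ := by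
  refine AutT_ext (vert_cases _ rfl (fun w => ?_) (fun w => ?_)) <;>
    simp [mul_apply, pair_apply_zero, pair_apply_one, σ_apply_zero, σ_apply_one]

lemma σ_σ : (σ : AutT 2) * σ = 1 := by
  refine AutT_ext (vert_cases _ rfl (fun w => ?_) (fun w => ?_)) <;>
    simp [mul_apply, σ_apply_zero, σ_apply_one, one_apply]

lemma σ_inv : (σ : AutT 2)⁻¹ = σ := by
  rw [inv_eq_iff_mul_eq_one, σ_σ]

lemma pair_mul' (x y u v z : AutT 2) :
    pair x y * (pair u v * z) = pair (x * u) (y * v) * z := by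
  rw [← mul_assoc, pair_mul]

lemma σ_mul_pair' (x y z : AutT 2) : σ * (pair x y * z) = pair y x * (σ * z) := by
  rw [← mul_assoc, σ_mul_pair, mul_assoc]

lemma σ_σ' (z : AutT 2) : σ * (σ * z) = z := by rw [← mul_assoc, σ_σ, one_mul]

lemma a_eq : bas_a = pair 1 bas_b := by
  refine AutT_ext (vert_cases _ rfl (fun w => ?_) (fun w => ?_))
  · show bas false (0 :: w) = _
    simp [bas, pair_apply_zero, one_apply]
  · show bas false (1 :: w) = _
    simp [bas, pair_apply_one]
    rfl

lemma b_eq : bas_b = pair bas_a 1 * σ := by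
  refine AutT_ext (vert_cases _ rfl (fun w => ?_) (fun w => ?_))
  · show bas true (0 :: w) = _
    simp [bas, mul_apply, σ_apply_zero, pair_apply_one, one_apply]
  · show bas true (1 :: w) = _
    simp [bas, mul_apply, σ_apply_one, pair_apply_zero]
    rfl

end Stmt16

namespace Stmt16
open Subgroup

lemma comm_pair (x y u v : AutT 2) :
    ⁅pair x y, pair u v⁆ = pair ⁅x, u⁆ ⁅y, v⁆ := by
  simp only [commutatorElement_def, pair_inv, pair_mul, mul_assoc]

lemma conj_pair0 (u v x y : AutT 2) :
    pair u v * pair x y * (pair u v)⁻¹ = pair (u * x * u⁻¹) (v * y * v⁻¹) := by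
  simp only [pair_inv, pair_mul, mul_assoc]

lemma conj_pair1 (u v x y : AutT 2) :
    (pair u v * σ) * pair x y * (pair u v * σ)⁻¹ = pair (u * y * u⁻¹) (v * x * v⁻¹) := by
  simp only [mul_inv_rev, pair_inv, σ_inv, mul_assoc, σ_mul_pair', σ_σ', pair_mul',
    pair_mul, σ_mul_pair, σ_σ, mul_one]

lemma aG : bas_a ∈ Basilica := Subgroup.subset_closure (by simp)

lemma bG : bas_b ∈ Basilica := Subgroup.subset_closure (by simp)

-- pointwise action lemmas
lemma a0 (w : Vert 2) : (bas_a : Equiv.Perm (Vert 2)) (0 :: w) = 0 :: w := by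
  show bas false (0 :: w) = _; simp [bas]

lemma a1 (w : Vert 2) :
    (bas_a : Equiv.Perm (Vert 2)) (1 :: w) = 1 :: (bas_b : Equiv.Perm (Vert 2)) w := by
  show bas false (1 :: w) = _; simp [bas]; rfl

lemma b0 (w : Vert 2) : (bas_b : Equiv.Perm (Vert 2)) (0 :: w) = 1 :: w := by
  show bas true (0 :: w) = _; simp [bas]

lemma b1 (w : Vert 2) :
    (bas_b : Equiv.Perm (Vert 2)) (1 :: w) = 0 :: (bas_a : Equiv.Perm (Vert 2)) w := by
  show bas true (1 :: w) = _; simp [bas]; rfl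

lemma ai0 (w : Vert 2) : ((bas_a : AutT 2) : Equiv.Perm (Vert 2))⁻¹ (0 :: w) = 0 :: w := by
  show basI false (0 :: w) = _; simp [basI]

lemma ai1 (w : Vert 2) :
    ((bas_a : AutT 2) : Equiv.Perm (Vert 2))⁻¹ (1 :: w)
      = 1 :: ((bas_b : AutT 2) : Equiv.Perm (Vert 2))⁻¹ w := by
  show basI false (1 :: w) = _; simp [basI]; rfl

lemma bi0 (w : Vert 2) :
    ((bas_b : AutT 2) : Equiv.Perm (Vert 2))⁻¹ (0 :: w)
      = 1 :: ((bas_a : AutT 2) : Equiv.Perm (Vert 2))⁻¹ w := by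
  show basI true (0 :: w) = _; simp [basI]; rfl

lemma bi1 (w : Vert 2) : ((bas_b : AutT 2) : Equiv.Perm (Vert 2))⁻¹ (1 :: w) = 0 :: w := by
  show basI true (1 :: w) = _; simp [basI]

lemma b_sq : bas_b * bas_b = pair bas_a bas_a := by
  refine AutT_ext (vert_cases _ rfl (fun w => ?_) (fun w => ?_)) <;>
    simp [mul_apply, a0, a1, b0, b1, pair_apply_zero, pair_apply_one]

lemma binv_ab : bas_b⁻¹ * (bas_a * bas_b) = pair bas_b 1 := by
  refine AutT_ext (vert_cases _ rfl (fun w => ?_) (fun w => ?_)) <;>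
    simp [mul_apply, a0, a1, b0, b1, bi0, bi1, pair_apply_zero, pair_apply_one, one_apply, -Equiv.Perm.coe_inv,
      Equiv.Perm.inv_eq_iff_eq]

lemma r_eq : ⁅bas_a, bas_b⁻¹⁆ = pair bas_b⁻¹ bas_b := by
  rw [commutatorElement_def, inv_inv]
  refine AutT_ext (vert_cases _ rfl (fun w => ?_) (fun w => ?_)) <;>
    simp [mul_apply, a0, a1, b0, b1, ai0, ai1, bi0, bi1,
      pair_apply_zero, pair_apply_one, -Equiv.Perm.coe_inv, Equiv.Perm.inv_eq_iff_eq]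

lemma ab_eq : ⁅bas_a, bas_b⁆ = pair (bas_a * (bas_b⁻¹ * bas_a⁻¹)) bas_b := by
  rw [commutatorElement_def]
  refine AutT_ext (vert_cases _ rfl (fun w => ?_) (fun w => ?_)) <;>
    simp [mul_apply, a0, a1, b0, b1, ai0, ai1, bi0, bi1,
      pair_apply_zero, pair_apply_one, -Equiv.Perm.coe_inv]

lemma A0gen : pair ⁅bas_a, bas_b⁆ 1 = ⁅bas_b * bas_b, bas_b⁻¹ * (bas_a * bas_b)⁆ := by
  rw [b_sq, binv_ab, comm_pair]
  congr 1
  group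

lemma A1gen : pair 1 ⁅bas_a, bas_b⁆ = ⁅bas_b * bas_b, bas_a⁆ := by
  conv_rhs => rw [a_eq]
  rw [b_sq, comm_pair, commutatorElement_one_right]

lemma comm_pair_a (x y : AutT 2) : ⁅pair x y, bas_a⁆ = pair 1 ⁅y, bas_b⁆ := by
  conv_lhs => rw [a_eq]
  rw [comm_pair, commutatorElement_one_right]

lemma comm_ab_a : ⁅⁅bas_a, bas_b⁆, bas_a⁆ = 1 := by
  rw [ab_eq, comm_pair_a]
  have h2 : ⁅bas_b, bas_b⁆ = 1 := by group
  rw [h2, pair_one]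

end Stmt16

namespace Stmt16
open Subgroup

-- commutator identities
lemma cI1 (x y z : AutT 2) : ⁅x, y * z⁆ = ⁅x, y⁆ * (y * ⁅x, z⁆ * y⁻¹) := by group
lemma cI2 (x y : AutT 2) : ⁅x, y⁻¹⁆ = y⁻¹ * ⁅x, y⁆⁻¹ * y := by group
lemma cI3 (x z y : AutT 2) : ⁅x * z, y⁆ = (x * ⁅z, y⁆ * x⁻¹) * ⁅x, y⁆ := by group
lemma cI4 (x y : AutT 2) : ⁅x⁻¹, y⁆ = x⁻¹ * ⁅x, y⁆⁻¹ * x := by group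
lemma cI5 (x : AutT 2) : ⁅x, x⁆ = 1 := by group
lemma cI6 (x y : AutT 2) : ⁅y, x⁆ = ⁅x, y⁆⁻¹ := by group

lemma comm_le {H K L : Subgroup (AutT 2)} (h1 : H ≤ L) (h2 : K ≤ L) : ⁅H, K⁆ ≤ L :=
  Subgroup.commutator_le.mpr fun h hh k hk => by
    rw [commutatorElement_def]
    exact mul_mem (mul_mem (mul_mem (h1 hh) (h2 hk)) (inv_mem (h1 hh))) (inv_mem (h2 hk))

lemma G'_le_G : (⁅Basilica, Basilica⁆ : Subgroup (AutT 2)) ≤ Basilica :=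
  comm_le le_rfl le_rfl

lemma γ3_le_G : (⁅(⁅Basilica, Basilica⁆ : Subgroup (AutT 2)), Basilica⁆ : Subgroup (AutT 2)) ≤ Basilica :=
  comm_le G'_le_G le_rfl

lemma G''_le_G' :
    (⁅(⁅Basilica, Basilica⁆ : Subgroup (AutT 2)), ⁅Basilica, Basilica⁆⁆ : Subgroup (AutT 2))
      ≤ ⁅Basilica, Basilica⁆ :=
  comm_le le_rfl le_rfl

-- conjugation invariance
lemma map_conj_G {g : AutT 2} (hg : g ∈ Basilica) :
    Basilica.map (MulAut.conj g).toMonoidHom = Basilica := by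
  ext x
  simp only [Subgroup.mem_map, MulEquiv.coe_toMonoidHom, MulAut.conj_apply]
  constructor
  · rintro ⟨y, hy, rfl⟩
    exact mul_mem (mul_mem hg hy) (inv_mem hg)
  · intro hx
    exact ⟨g⁻¹ * x * g, mul_mem (mul_mem (inv_mem hg) hx) hg, by group⟩

lemma conj_mem_of_map {H : Subgroup (AutT 2)} {g x : AutT 2}
    (hmap : H.map (MulAut.conj g).toMonoidHom = H) (hx : x ∈ H) : g * x * g⁻¹ ∈ H := by
  have : (MulAut.conj g).toMonoidHom x ∈ H.map (MulAut.conj g).toMonoidHom :=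
    Subgroup.mem_map_of_mem _ hx
  rw [hmap] at this
  simpa [MulAut.conj_apply] using this

lemma map_conj_G' {g : AutT 2} (hg : g ∈ Basilica) :
    (⁅Basilica, Basilica⁆ : Subgroup (AutT 2)).map (MulAut.conj g).toMonoidHom
      = ⁅Basilica, Basilica⁆ := by
  rw [Subgroup.map_commutator, map_conj_G hg]

lemma conjG' {g x : AutT 2} (hg : g ∈ Basilica) (hx : x ∈ (⁅Basilica, Basilica⁆ : Subgroup (AutT 2))) :
    g * x * g⁻¹ ∈ (⁅Basilica, Basilica⁆ : Subgroup (AutT 2)) :=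
  conj_mem_of_map (map_conj_G' hg) hx

lemma conjγ3 {g x : AutT 2} (hg : g ∈ Basilica)
    (hx : x ∈ (⁅(⁅Basilica, Basilica⁆ : Subgroup (AutT 2)), Basilica⁆ : Subgroup (AutT 2))) :
    g * x * g⁻¹ ∈ (⁅(⁅Basilica, Basilica⁆ : Subgroup (AutT 2)), Basilica⁆ : Subgroup (AutT 2)) :=
  conj_mem_of_map (by rw [Subgroup.map_commutator, map_conj_G hg, map_conj_G' hg]) hx

lemma conjG'' {g x : AutT 2} (hg : g ∈ Basilica)
    (hx : x ∈ (⁅(⁅Basilica, Basilica⁆ : Subgroup (AutT 2)), ⁅Basilica, Basilica⁆⁆ : Subgroup (AutT 2))) :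
    g * x * g⁻¹ ∈ (⁅(⁅Basilica, Basilica⁆ : Subgroup (AutT 2)), ⁅Basilica, Basilica⁆⁆ : Subgroup (AutT 2)) :=
  conj_mem_of_map (by rw [Subgroup.map_commutator, map_conj_G' hg]) hx

-- self-replication
def K0 : Subgroup (AutT 2) where
  carrier := {x | ∃ y, pair x y ∈ Basilica}
  one_mem' := ⟨1, by rw [pair_one]; exact one_mem _⟩
  mul_mem' := by
    rintro x x' ⟨y, hy⟩ ⟨y', hy'⟩
    exact ⟨y * y', by rw [← pair_mul]; exact mul_mem hy hy'⟩
  inv_mem' := by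
    rintro x ⟨y, hy⟩
    exact ⟨y⁻¹, by rw [← pair_inv]; exact inv_mem hy⟩

def K1 : Subgroup (AutT 2) where
  carrier := {x | ∃ y, pair y x ∈ Basilica}
  one_mem' := ⟨1, by rw [pair_one]; exact one_mem _⟩
  mul_mem' := by
    rintro x x' ⟨y, hy⟩ ⟨y', hy'⟩
    exact ⟨y * y', by rw [← pair_mul]; exact mul_mem hy hy'⟩
  inv_mem' := by
    rintro x ⟨y, hy⟩
    exact ⟨y⁻¹, by rw [← pair_inv]; exact inv_mem hy⟩

lemma repl0 {g : AutT 2} (hg : g ∈ Basilica) : ∃ y, pair g y ∈ Basilica := by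
  have : Basilica ≤ K0 := by
    apply (Subgroup.closure_le _).mpr
    rintro x (rfl | rfl)
    · exact ⟨bas_a, by rw [← b_sq]; exact mul_mem bG bG⟩
    · exact ⟨1, by rw [← binv_ab]; exact mul_mem (inv_mem bG) (mul_mem aG bG)⟩
  exact this hg

lemma repl1 {g : AutT 2} (hg : g ∈ Basilica) : ∃ y, pair y g ∈ Basilica := by
  have : Basilica ≤ K1 := by
    apply (Subgroup.closure_le _).mpr
    rintro x (rfl | rfl)
    · exact ⟨bas_a, by rw [← b_sq]; exact mul_mem bG bG⟩
    · exact ⟨1, by rw [← a_eq]; exact aG⟩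
  exact this hg

-- every element of `G` decomposes as `pair x y * σ^e` with sections in `G`
def E2 : Subgroup (AutT 2) where
  carrier := {g | ∃ x y : AutT 2, x ∈ Basilica ∧ y ∈ Basilica ∧
    (g = pair x y ∨ g = pair x y * σ)}
  one_mem' := ⟨1, 1, one_mem _, one_mem _, Or.inl (by rw [pair_one])⟩
  mul_mem' := by
    rintro g h ⟨x, y, hx, hy, (rfl | rfl)⟩ ⟨u, v, hu, hv, (rfl | rfl)⟩
    · exact ⟨x * u, y * v, mul_mem hx hu, mul_mem hy hv, Or.inl (pair_mul ..)⟩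
    · exact ⟨x * u, y * v, mul_mem hx hu, mul_mem hy hv, Or.inr (by
        rw [← mul_assoc, pair_mul])⟩
    · refine ⟨x * v, y * u, mul_mem hx hv, mul_mem hy hu, Or.inr ?_⟩
      simp only [mul_assoc, σ_mul_pair, σ_mul_pair', pair_mul', pair_mul, σ_σ, σ_σ', mul_one]
    · refine ⟨x * v, y * u, mul_mem hx hv, mul_mem hy hu, Or.inl ?_⟩
      simp only [mul_assoc, σ_mul_pair, σ_mul_pair', pair_mul', pair_mul, σ_σ, σ_σ', mul_one]
  inv_mem' := by
    rintro g ⟨x, y, hx, hy, (rfl | rfl)⟩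
    · exact ⟨x⁻¹, y⁻¹, inv_mem hx, inv_mem hy, Or.inl (pair_inv ..)⟩
    · refine ⟨y⁻¹, x⁻¹, inv_mem hy, inv_mem hx, Or.inr ?_⟩
      rw [mul_inv_rev, σ_inv, pair_inv, σ_mul_pair]

lemma G_le_E2 : Basilica ≤ E2 := by
  apply (Subgroup.closure_le _).mpr
  rintro x (rfl | rfl)
  · exact ⟨1, bas_b, one_mem _, bG, Or.inl a_eq⟩
  · exact ⟨bas_a, 1, aG, one_mem _, Or.inr b_eq⟩

-- universal tool: `G' ≤ T` for conjugation-closed `T` containing `⁅a,b⁆`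
section Tool
variable (T : Subgroup (AutT 2))

def Zright (hconj : ∀ g ∈ Basilica, ∀ t ∈ T, g * t * g⁻¹ ∈ T) (x : AutT 2) : Subgroup (AutT 2) where
  carrier := {y | y ∈ Basilica ∧ ⁅x, y⁆ ∈ T}
  one_mem' := ⟨one_mem _, by rw [commutatorElement_one_right]; exact one_mem _⟩
  mul_mem' := by
    rintro y y' ⟨hyG, hy⟩ ⟨hy'G, hy'⟩
    exact ⟨mul_mem hyG hy'G, by rw [cI1]; exact mul_mem hy (hconj y hyG _ hy')⟩
  inv_mem' := by
    rintro y ⟨hyG, hy⟩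
    exact ⟨inv_mem hyG, by rw [cI2]; exact hconj y⁻¹ (inv_mem hyG) _ (inv_mem hy)⟩

lemma comm_right_all (hconj : ∀ g ∈ Basilica, ∀ t ∈ T, g * t * g⁻¹ ∈ T) {x : AutT 2} (hxa : ⁅x, bas_a⁆ ∈ T) (hxb : ⁅x, bas_b⁆ ∈ T) :
    ∀ y ∈ Basilica, ⁅x, y⁆ ∈ T := by
  intro y hy
  have : Basilica ≤ Zright T hconj x := by
    apply (Subgroup.closure_le _).mpr
    rintro z (rfl | rfl)
    · exact ⟨aG, hxa⟩
    · exact ⟨bG, hxb⟩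
  exact (this hy).2

def Zleft (hconj : ∀ g ∈ Basilica, ∀ t ∈ T, g * t * g⁻¹ ∈ T) : Subgroup (AutT 2) where
  carrier := {x | x ∈ Basilica ∧ ∀ y ∈ Basilica, ⁅x, y⁆ ∈ T}
  one_mem' := ⟨one_mem _, fun y _ => by
    rw [commutatorElement_def, one_mul, inv_one, mul_one, mul_inv_cancel]; exact one_mem _⟩
  mul_mem' := by
    rintro x x' ⟨hxG, hx⟩ ⟨hx'G, hx'⟩
    refine ⟨mul_mem hxG hx'G, fun y hy => ?_⟩
    rw [cI3]
    exact mul_mem (hconj x hxG _ (hx' y hy)) (hx y hy)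
  inv_mem' := by
    rintro x ⟨hxG, hx⟩
    refine ⟨inv_mem hxG, fun y hy => ?_⟩
    rw [cI4]
    exact hconj x⁻¹ (inv_mem hxG) _ (inv_mem (hx y hy))

lemma Gprime_le (hconj : ∀ g ∈ Basilica, ∀ t ∈ T, g * t * g⁻¹ ∈ T) (hab : ⁅bas_a, bas_b⁆ ∈ T) : (⁅Basilica, Basilica⁆ : Subgroup (AutT 2)) ≤ T := by
  apply Subgroup.commutator_le.mpr
  intro x hx y hy
  have hZ : Basilica ≤ Zleft T hconj := by
    apply (Subgroup.closure_le _).mpr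
    rintro z (rfl | rfl)
    · refine ⟨aG, comm_right_all T hconj ?_ hab⟩
      rw [cI5]; exact one_mem _
    · refine ⟨bG, comm_right_all T hconj ?_ ?_⟩
      · rw [cI6]; exact inv_mem hab
      · rw [cI5]; exact one_mem _
  exact (hZ hx).2 y hy

end Tool

end Stmt16

namespace Stmt16
open Subgroup

/-- the monoid hom version of pair, to get zpow lemmas -/
lemma pair_pow (x y : AutT 2) (n : ℕ) : (pair x y) ^ n = pair (x ^ n) (y ^ n) := by
  induction n with
  | zero => simp [pair_one]
  | succ n ih => rw [pow_succ, pow_succ, pow_succ, ih, pair_mul]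

lemma pair_zpow (x y : AutT 2) (n : ℤ) : (pair x y) ^ n = pair (x ^ n) (y ^ n) := by
  cases n with
  | ofNat n => simpa [zpow_natCast] using pair_pow x y n
  | negSucc n => rw [zpow_negSucc, zpow_negSucc, zpow_negSucc, pair_pow, pair_inv]

/-- the subgroup `⟨b⟩ G'` -/
def Bsub : Subgroup (AutT 2) where
  carrier := {x | ∃ (n : ℤ) (c : AutT 2), c ∈ (⁅Basilica, Basilica⁆ : Subgroup (AutT 2)) ∧
    x = bas_b ^ n * c}
  one_mem' := ⟨0, 1, one_mem _, by simp⟩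
  mul_mem' := by
    rintro x x' ⟨n, c, hc, rfl⟩ ⟨m, d, hd, rfl⟩
    refine ⟨n + m, (bas_b ^ (-m) * c * (bas_b ^ (-m))⁻¹) * d,
      mul_mem (conjG' (zpow_mem bG _) hc) hd, ?_⟩
    group
  inv_mem' := by
    rintro x ⟨n, c, hc, rfl⟩
    refine ⟨-n, bas_b ^ n * c⁻¹ * (bas_b ^ n)⁻¹, conjG' (zpow_mem bG _) (inv_mem hc), ?_⟩
    group

lemma bB : bas_b ∈ Bsub := ⟨1, 1, one_mem _, by simp⟩

lemma G'_le_B : (⁅Basilica, Basilica⁆ : Subgroup (AutT 2)) ≤ Bsub :=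
  fun c hc => ⟨0, c, hc, by simp⟩

lemma B_le_G : Bsub ≤ Basilica := by
  rintro x ⟨n, c, hc, rfl⟩
  exact mul_mem (zpow_mem bG n) (G'_le_G hc)

lemma conjB {g x : AutT 2} (hg : g ∈ Basilica) (hx : x ∈ Bsub) : g * x * g⁻¹ ∈ Bsub := by
  obtain ⟨n, c, hc, rfl⟩ := hx
  refine ⟨n, ⁅bas_b ^ (-n), g⁆ * (g * c * g⁻¹),
    mul_mem (Subgroup.commutator_mem_commutator (zpow_mem bG _) hg) (conjG' hg hc), ?_⟩
  rw [commutatorElement_def]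
  group

/-- both sections of `G'`-elements lie in `⟨b⟩G'` -/
def Ssub : Subgroup (AutT 2) where
  carrier := {f | ∃ x y : AutT 2, x ∈ Bsub ∧ y ∈ Bsub ∧ f = pair x y}
  one_mem' := ⟨1, 1, one_mem _, one_mem _, pair_one.symm⟩
  mul_mem' := by
    rintro f f' ⟨x, y, hx, hy, rfl⟩ ⟨u, v, hu, hv, rfl⟩
    exact ⟨x * u, y * v, mul_mem hx hu, mul_mem hy hv, (pair_mul ..)⟩
  inv_mem' := by
    rintro f ⟨x, y, hx, hy, rfl⟩
    exact ⟨x⁻¹, y⁻¹, inv_mem hx, inv_mem hy, (pair_inv ..)⟩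

lemma conjS : ∀ g ∈ Basilica, ∀ t ∈ Ssub, g * t * g⁻¹ ∈ Ssub := by
  intro g hg t ht
  obtain ⟨x, y, hx, hy, rfl⟩ := ht
  obtain ⟨u, v, hu, hv, (rfl | rfl)⟩ := G_le_E2 hg
  · exact ⟨u * x * u⁻¹, v * y * v⁻¹, conjB hu hx, conjB hv hy, (conj_pair0 ..)⟩
  · exact ⟨u * y * u⁻¹, v * x * v⁻¹, conjB hu hy, conjB hv hx, (conj_pair1 ..)⟩

lemma ab_mem_S : ⁅bas_a, bas_b⁆ ∈ Ssub := by
  refine ⟨bas_a * (bas_b⁻¹ * bas_a⁻¹), bas_b,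
    ⟨-1, ⁅bas_b, bas_a⁆, Subgroup.commutator_mem_commutator bG aG, ?_⟩, bB, ab_eq⟩
  rw [commutatorElement_def]
  group

lemma G'_le_S : (⁅Basilica, Basilica⁆ : Subgroup (AutT 2)) ≤ Ssub :=
  Gprime_le Ssub conjS ab_mem_S

/-- commutators of elements of `⟨b⟩G'` lie in `γ₃` -/
lemma commB {u v : AutT 2} (hu : u ∈ Bsub) (hv : v ∈ Bsub) :
    ⁅u, v⁆ ∈ (⁅(⁅Basilica, Basilica⁆ : Subgroup (AutT 2)), Basilica⁆ : Subgroup (AutT 2)) := by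
  obtain ⟨m, x, hx, rfl⟩ := hu
  obtain ⟨n, y, hy, rfl⟩ := hv
  have key : ⁅bas_b ^ m * x, bas_b ^ n * y⁆ =
      (bas_b ^ m * ⁅x, bas_b ^ n * y⁆ * (bas_b ^ m)⁻¹) *
        (bas_b ^ n * ⁅y, bas_b ^ m⁆⁻¹ * (bas_b ^ n)⁻¹) := by
    simp only [commutatorElement_def]
    group
  rw [key]
  refine mul_mem (conjγ3 (zpow_mem bG m) ?_) (conjγ3 (zpow_mem bG n) ?_)
  · exact Subgroup.commutator_mem_commutator hx (mul_mem (zpow_mem bG n) (G'_le_G hy))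
  · exact inv_mem (Subgroup.commutator_mem_commutator hy (zpow_mem bG m))

/-- first sections with trivial complement in `G'` -/
def A0 : Subgroup (AutT 2) where
  carrier := {z | pair z 1 ∈ (⁅Basilica, Basilica⁆ : Subgroup (AutT 2))}
  one_mem' := by
    simp only [Set.mem_setOf_eq]
    rw [pair_one]; exact one_mem _
  mul_mem' := by
    intro z z' hz hz'
    show pair (z * z') 1 ∈ (⁅Basilica, Basilica⁆ : Subgroup (AutT 2))
    rw [show pair (z * z') 1 = pair z 1 * pair z' 1 by rw [pair_mul, mul_one]]
    exact mul_mem hz hz'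
  inv_mem' := by
    intro z hz
    show pair z⁻¹ 1 ∈ (⁅Basilica, Basilica⁆ : Subgroup (AutT 2))
    rw [show pair z⁻¹ 1 = (pair z 1)⁻¹ by rw [pair_inv, inv_one]]
    exact inv_mem hz

def A1 : Subgroup (AutT 2) where
  carrier := {z | pair 1 z ∈ (⁅Basilica, Basilica⁆ : Subgroup (AutT 2))}
  one_mem' := by
    simp only [Set.mem_setOf_eq]
    rw [pair_one]; exact one_mem _
  mul_mem' := by
    intro z z' hz hz'
    show pair 1 (z * z') ∈ (⁅Basilica, Basilica⁆ : Subgroup (AutT 2))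
    rw [show pair 1 (z * z') = pair 1 z * pair 1 z' by rw [pair_mul, mul_one]]
    exact mul_mem hz hz'
  inv_mem' := by
    intro z hz
    show pair 1 z⁻¹ ∈ (⁅Basilica, Basilica⁆ : Subgroup (AutT 2))
    rw [show pair 1 z⁻¹ = (pair 1 z)⁻¹ by rw [pair_inv, inv_one]]
    exact inv_mem hz

lemma mem_A0 {z : AutT 2} : z ∈ A0 ↔ pair z 1 ∈ (⁅Basilica, Basilica⁆ : Subgroup (AutT 2)) :=
  Iff.rfl

lemma mem_A1 {z : AutT 2} : z ∈ A1 ↔ pair 1 z ∈ (⁅Basilica, Basilica⁆ : Subgroup (AutT 2)) :=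
  Iff.rfl

lemma conjA0 : ∀ g ∈ Basilica, ∀ z ∈ A0, g * z * g⁻¹ ∈ A0 := by
  intro g hg z hz
  obtain ⟨y, hy⟩ := repl0 hg
  rw [mem_A0]
  rw [show pair (g * z * g⁻¹) 1 = pair g y * pair z 1 * (pair g y)⁻¹ by
    rw [conj_pair0]; congr 1; group]
  exact conjG' hy (mem_A0.mp hz)

lemma conjA1 : ∀ g ∈ Basilica, ∀ z ∈ A1, g * z * g⁻¹ ∈ A1 := by
  intro g hg z hz
  obtain ⟨y, hy⟩ := repl1 hg
  rw [mem_A1]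
  rw [show pair 1 (g * z * g⁻¹) = pair y g * pair 1 z * (pair y g)⁻¹ by
    rw [conj_pair0]; congr 1; group]
  exact conjG' hy (mem_A1.mp hz)

lemma G'_le_A0 : (⁅Basilica, Basilica⁆ : Subgroup (AutT 2)) ≤ A0 :=
  Gprime_le A0 conjA0 (by
    rw [mem_A0, A0gen]
    exact Subgroup.commutator_mem_commutator (mul_mem bG bG)
      (mul_mem (inv_mem bG) (mul_mem aG bG)))

lemma G'_le_A1 : (⁅Basilica, Basilica⁆ : Subgroup (AutT 2)) ≤ A1 :=
  Gprime_le A1 conjA1 (by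
    rw [mem_A1, A1gen]
    exact Subgroup.commutator_mem_commutator (mul_mem bG bG) aG)

/-- `ψ⁻¹` of `B × B ∩ (antidiagonal)`-type elements of `G'` -/
lemma pairB_mem_G' {u : AutT 2} (hu : u ∈ Bsub) :
    ∃ u' : AutT 2, u' ∈ Bsub ∧ pair u u' ∈ (⁅Basilica, Basilica⁆ : Subgroup (AutT 2))
      ∧ pair u' u ∈ (⁅Basilica, Basilica⁆ : Subgroup (AutT 2)) := by
  obtain ⟨n, c, hc, rfl⟩ := hu
  have hr : pair bas_b⁻¹ bas_b ∈ (⁅Basilica, Basilica⁆ : Subgroup (AutT 2)) := by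
    rw [← r_eq]
    exact Subgroup.commutator_mem_commutator aG (inv_mem bG)
  refine ⟨bas_b ^ (-n), ⟨-n, 1, one_mem _, by simp⟩, ?_, ?_⟩
  · rw [show pair (bas_b ^ n * c) (bas_b ^ (-n)) = (pair bas_b⁻¹ bas_b) ^ (-n) * pair c 1 by
      rw [pair_zpow, pair_mul]; congr 1 <;> group]
    exact mul_mem (zpow_mem hr _) (mem_A0.mp (G'_le_A0 hc))
  · rw [show pair (bas_b ^ (-n)) (bas_b ^ n * c) = (pair bas_b⁻¹ bas_b) ^ n * pair 1 c by
      rw [pair_zpow, pair_mul]; congr 1 <;> group]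
    exact mul_mem (zpow_mem hr _) (mem_A1.mp (G'_le_A1 hc))

end Stmt16

namespace Stmt16
open Subgroup

/-- elements whose left insertion lies in `G''` -/
def L0 : Subgroup (AutT 2) where
  carrier := {z | pair z 1 ∈
    (⁅(⁅Basilica, Basilica⁆ : Subgroup (AutT 2)), ⁅Basilica, Basilica⁆⁆ : Subgroup (AutT 2))}
  one_mem' := by
    simp only [Set.mem_setOf_eq]
    rw [pair_one]; exact one_mem _
  mul_mem' := by
    intro z z' hz hz'
    show pair (z * z') 1 ∈ (⁅(⁅Basilica, Basilica⁆ : Subgroup (AutT 2)), ⁅Basilica, Basilica⁆⁆ : Subgroup (AutT 2))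
    rw [show pair (z * z') 1 = pair z 1 * pair z' 1 by rw [pair_mul, mul_one]]
    exact mul_mem hz hz'
  inv_mem' := by
    intro z hz
    show pair z⁻¹ 1 ∈ (⁅(⁅Basilica, Basilica⁆ : Subgroup (AutT 2)), ⁅Basilica, Basilica⁆⁆ : Subgroup (AutT 2))
    rw [show pair z⁻¹ 1 = (pair z 1)⁻¹ by rw [pair_inv, inv_one]]
    exact inv_mem hz

def L1 : Subgroup (AutT 2) where
  carrier := {z | pair 1 z ∈
    (⁅(⁅Basilica, Basilica⁆ : Subgroup (AutT 2)), ⁅Basilica, Basilica⁆⁆ : Subgroup (AutT 2))}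
  one_mem' := by
    simp only [Set.mem_setOf_eq]
    rw [pair_one]; exact one_mem _
  mul_mem' := by
    intro z z' hz hz'
    show pair 1 (z * z') ∈ (⁅(⁅Basilica, Basilica⁆ : Subgroup (AutT 2)), ⁅Basilica, Basilica⁆⁆ : Subgroup (AutT 2))
    rw [show pair 1 (z * z') = pair 1 z * pair 1 z' by rw [pair_mul, mul_one]]
    exact mul_mem hz hz'
  inv_mem' := by
    intro z hz
    show pair 1 z⁻¹ ∈ (⁅(⁅Basilica, Basilica⁆ : Subgroup (AutT 2)), ⁅Basilica, Basilica⁆⁆ : Subgroup (AutT 2))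
    rw [show pair 1 z⁻¹ = (pair 1 z)⁻¹ by rw [pair_inv, inv_one]]
    exact inv_mem hz

lemma mem_L0 {z : AutT 2} : z ∈ L0 ↔ pair z 1 ∈
    (⁅(⁅Basilica, Basilica⁆ : Subgroup (AutT 2)), ⁅Basilica, Basilica⁆⁆ : Subgroup (AutT 2)) :=
  Iff.rfl

lemma mem_L1 {z : AutT 2} : z ∈ L1 ↔ pair 1 z ∈
    (⁅(⁅Basilica, Basilica⁆ : Subgroup (AutT 2)), ⁅Basilica, Basilica⁆⁆ : Subgroup (AutT 2)) :=
  Iff.rfl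

lemma conjL0 : ∀ g ∈ Basilica, ∀ z ∈ L0, g * z * g⁻¹ ∈ L0 := by
  intro g hg z hz
  obtain ⟨y, hy⟩ := repl0 hg
  rw [mem_L0]
  rw [show pair (g * z * g⁻¹) 1 = pair g y * pair z 1 * (pair g y)⁻¹ by
    rw [conj_pair0]; congr 1; group]
  exact conjG'' hy (mem_L0.mp hz)

lemma conjL1 : ∀ g ∈ Basilica, ∀ z ∈ L1, g * z * g⁻¹ ∈ L1 := by
  intro g hg z hz
  obtain ⟨y, hy⟩ := repl1 hg
  rw [mem_L1]
  rw [show pair 1 (g * z * g⁻¹) = pair y g * pair 1 z * (pair y g)⁻¹ by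
    rw [conj_pair0]; congr 1; group]
  exact conjG'' hy (mem_L1.mp hz)

lemma supply0 {z u : AutT 2} (hz : z ∈ (⁅Basilica, Basilica⁆ : Subgroup (AutT 2)))
    (hu : u ∈ Bsub) : pair ⁅z, u⁆ 1 ∈
    (⁅(⁅Basilica, Basilica⁆ : Subgroup (AutT 2)), ⁅Basilica, Basilica⁆⁆ : Subgroup (AutT 2)) := by
  obtain ⟨u', _, huu', -⟩ := pairB_mem_G' hu
  have h := Subgroup.commutator_mem_commutator (mem_A0.mp (G'_le_A0 hz)) huu'
  rwa [comm_pair, commutatorElement_one_left] at h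

lemma supply1 {z u : AutT 2} (hz : z ∈ (⁅Basilica, Basilica⁆ : Subgroup (AutT 2)))
    (hu : u ∈ Bsub) : pair 1 ⁅z, u⁆ ∈
    (⁅(⁅Basilica, Basilica⁆ : Subgroup (AutT 2)), ⁅Basilica, Basilica⁆⁆ : Subgroup (AutT 2)) := by
  obtain ⟨u', _, -, hu'u⟩ := pairB_mem_G' hu
  have h := Subgroup.commutator_mem_commutator (mem_A1.mp (G'_le_A1 hz)) hu'u
  rwa [comm_pair, commutatorElement_one_left] at h

lemma mem_Zleft {T : Subgroup (AutT 2)} {hconj : ∀ g ∈ Basilica, ∀ t ∈ T, g * t * g⁻¹ ∈ T}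
    {x : AutT 2} : x ∈ Zleft T hconj ↔ x ∈ Basilica ∧ ∀ y ∈ Basilica, ⁅x, y⁆ ∈ T :=
  Iff.rfl

lemma conjZleft {T : Subgroup (AutT 2)} {hconj : ∀ g ∈ Basilica, ∀ t ∈ T, g * t * g⁻¹ ∈ T} :
    ∀ g ∈ Basilica, ∀ t ∈ Zleft T hconj, g * t * g⁻¹ ∈ Zleft T hconj := by
  intro g hg t ht
  obtain ⟨htG, ht2⟩ := mem_Zleft.mp ht
  refine mem_Zleft.mpr ⟨mul_mem (mul_mem hg htG) (inv_mem hg), fun y hy => ?_⟩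
  rw [show ⁅g * t * g⁻¹, y⁆ = g * ⁅t, g⁻¹ * y * g⁆ * g⁻¹ by
    simp only [commutatorElement_def]; group]
  exact hconj g hg _ (ht2 _ (mul_mem (mul_mem (inv_mem hg) hy) hg))

lemma γ3_le_L0 :
    (⁅(⁅Basilica, Basilica⁆ : Subgroup (AutT 2)), Basilica⁆ : Subgroup (AutT 2)) ≤ L0 := by
  apply Subgroup.commutator_le.mpr
  intro z hz g hg
  have habZ : ⁅bas_a, bas_b⁆ ∈ Zleft L0 conjL0 := by
    refine mem_Zleft.mpr ⟨G'_le_G (Subgroup.commutator_mem_commutator aG bG),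
      comm_right_all L0 conjL0 ?_ ?_⟩
    · rw [comm_ab_a]; exact one_mem _
    · exact mem_L0.mpr (supply0 (Subgroup.commutator_mem_commutator aG bG) bB)
  exact (mem_Zleft.mp ((Gprime_le (Zleft L0 conjL0) conjZleft habZ) hz)).2 g hg

lemma γ3_le_L1 :
    (⁅(⁅Basilica, Basilica⁆ : Subgroup (AutT 2)), Basilica⁆ : Subgroup (AutT 2)) ≤ L1 := by
  apply Subgroup.commutator_le.mpr
  intro z hz g hg
  have habZ : ⁅bas_a, bas_b⁆ ∈ Zleft L1 conjL1 := by
    refine mem_Zleft.mpr ⟨G'_le_G (Subgroup.commutator_mem_commutator aG bG),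
      comm_right_all L1 conjL1 ?_ ?_⟩
    · rw [comm_ab_a]; exact one_mem _
    · exact mem_L1.mpr (supply1 (Subgroup.commutator_mem_commutator aG bG) bB)
  exact (mem_Zleft.mp ((Gprime_le (Zleft L1 conjL1) conjZleft habZ) hz)).2 g hg

/-- pairs with both coordinates in `γ₃` -/
def Psub : Subgroup (AutT 2) where
  carrier := {f | ∃ g₀ ∈ (⁅(⁅Basilica, Basilica⁆ : Subgroup (AutT 2)), Basilica⁆ : Subgroup (AutT 2)),
    ∃ g₁ ∈ (⁅(⁅Basilica, Basilica⁆ : Subgroup (AutT 2)), Basilica⁆ : Subgroup (AutT 2)),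
      f = pair g₀ g₁}
  one_mem' := ⟨1, one_mem _, 1, one_mem _, pair_one.symm⟩
  mul_mem' := by
    rintro f f' ⟨x, hx, y, hy, rfl⟩ ⟨u, hu, v, hv, rfl⟩
    exact ⟨x * u, mul_mem hx hu, y * v, mul_mem hy hv, pair_mul ..⟩
  inv_mem' := by
    rintro f ⟨x, hx, y, hy, rfl⟩
    exact ⟨x⁻¹, inv_mem hx, y⁻¹, inv_mem hy, pair_inv ..⟩

lemma G''_le_P :
    (⁅(⁅Basilica, Basilica⁆ : Subgroup (AutT 2)), ⁅Basilica, Basilica⁆⁆ : Subgroup (AutT 2))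
      ≤ Psub := by
  apply Subgroup.commutator_le.mpr
  intro c hc d hd
  obtain ⟨x, y, hx, hy, rfl⟩ := G'_le_S hc
  obtain ⟨u, v, hu, hv, rfl⟩ := G'_le_S hd
  exact ⟨⁅x, u⁆, commB hx hu, ⁅y, v⁆, commB hy hv, comm_pair ..⟩

end Stmt16

open Stmt16 Subgroup

/-- Lemma 4.12(1): for the Basilica group `G`, the second derived
subgroup satisfies `ψ(G'') = γ₃(G) × γ₃(G)`, where `γ₃(G) = [[G,G],G]` is the third
term of the lower central series: `G''` consists exactly of the tree automorphisms
whose two first-level sections lie in `γ₃(G)`. -/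
theorem stmt_16 :
    ((⁅⁅Basilica, Basilica⁆, ⁅Basilica, Basilica⁆⁆ : Subgroup (AutT 2)) :
        Set (AutT 2)) =
      {f : AutT 2 | ∃ g₀ ∈ ⁅⁅Basilica, Basilica⁆, Basilica⁆,
        ∃ g₁ ∈ ⁅⁅Basilica, Basilica⁆, Basilica⁆, ∀ w : Vert 2,
          (f : Equiv.Perm (Vert 2)) (0 :: w) = 0 :: (g₀ : Equiv.Perm (Vert 2)) w ∧
          (f : Equiv.Perm (Vert 2)) (1 :: w) = 1 :: (g₁ : Equiv.Perm (Vert 2)) w} := by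
  apply Set.ext
  intro f
  constructor
  · intro hf
    obtain ⟨g₀, hg₀, g₁, hg₁, rfl⟩ := G''_le_P hf
    exact ⟨g₀, hg₀, g₁, hg₁, fun w => ⟨pair_apply_zero .., pair_apply_one ..⟩⟩
  · rintro ⟨g₀, hg₀, g₁, hg₁, hw⟩
    have hf : f = Stmt16.pair g₀ g₁ := by
      refine AutT_ext (vert_cases _ ?_ (fun w => ?_) (fun w => ?_))
      · rw [root_fixed f, pair_apply_nil]
      · rw [(hw w).1, pair_apply_zero]
      · rw [(hw w).2, pair_apply_one]
    show f ∈ (⁅(⁅Basilica, Basilica⁆ : Subgroup (AutT 2)), ⁅Basilica, Basilica⁆⁆ : Subgroup (AutT 2))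
    rw [hf, show Stmt16.pair g₀ g₁ = Stmt16.pair g₀ 1 * Stmt16.pair 1 g₁ by
      rw [pair_mul, mul_one, one_mul]]
    exact mul_mem (mem_L0.mp (γ3_le_L0 hg₀)) (mem_L1.mp (γ3_le_L1 hg₁))
end
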